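/- arXiv:2604.22158 — 9 statements merged into one kernel-verified Lean document; each statement's English description precedes it below -/
import Mathlib

section
/- Let 0.5 < x < y ≤ ȳ < 1 be real numbers. Then 1/Φ⁻¹(x)² − 1/Φ⁻¹(y)² ≤ (2·Φ⁻¹(ȳ) / (φ(Φ⁻¹(ȳ)) · Φ⁻¹(x)⁴)) · (y − x). -/
/-- Φ: the cumulative distribution function of the standard normal distribution. -/
noncomputable def stdGaussianCDF (x : ℝ) : ℝ :=
  (ProbabilityTheory.gaussianReal 0 1 (Set.Iic x)).toReal

/-- Φ⁻¹: the standard normal quantile function (inverse of the CDF). -/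
noncomputable def stdGaussianQuantile : ℝ → ℝ :=
  Function.invFun stdGaussianCDF

/-- φ: the standard normal probability density function. -/
noncomputable def stdGaussianPDF (x : ℝ) : ℝ :=
  ProbabilityTheory.gaussianPDFReal 0 1 x

open MeasureTheory ProbabilityTheory Set intervalIntegral

lemma pdf_formula (t : ℝ) :
    stdGaussianPDF t = (Real.sqrt (2 * Real.pi))⁻¹ * Real.exp (-(t^2) / 2) := by
  simp [stdGaussianPDF, gaussianPDFReal]

lemma pdf_integrable : Integrable stdGaussianPDF := integrable_gaussianPDFReal 0 1

lemma pdf_pos (t : ℝ) : 0 < stdGaussianPDF t := gaussianPDFReal_pos 0 1 t one_ne_zero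

lemma cdf_eq (x : ℝ) : stdGaussianCDF x = ∫ t in Iic x, stdGaussianPDF t := by
  rw [stdGaussianCDF, gaussianReal_apply_eq_integral 0 one_ne_zero,
    ENNReal.toReal_ofReal (setIntegral_nonneg measurableSet_Iic
      fun t _ => gaussianPDFReal_nonneg 0 1 t)]
  rfl

lemma cdf_sub (a b : ℝ) :
    stdGaussianCDF b - stdGaussianCDF a = ∫ t in a..b, stdGaussianPDF t := by
  rw [cdf_eq, cdf_eq, intervalIntegral.integral_Iic_sub_Iic
    pdf_integrable.integrableOn pdf_integrable.integrableOn]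

lemma cdf_strictMono : StrictMono stdGaussianCDF := by
  intro a b hab
  have h : 0 < ∫ t in a..b, stdGaussianPDF t :=
    intervalIntegral_pos_of_pos (pdf_integrable.intervalIntegrable)
      (fun t => pdf_pos t) hab
  have := cdf_sub a b
  linarith

lemma cdf_continuous : Continuous stdGaussianCDF := by
  have h : Continuous fun b => ∫ t in (0:ℝ)..b, stdGaussianPDF t :=
    pdf_integrable.continuous_primitive 0
  have : stdGaussianCDF = fun b => stdGaussianCDF 0 + ∫ t in (0:ℝ)..b, stdGaussianPDF t := by
    ext b
    rw [← cdf_sub 0 b]; ring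
  rw [this]
  exact continuous_const.add h

lemma cdf_zero : stdGaussianCDF 0 = 1/2 := by
  have h1 : (∫ t in Iic (0:ℝ), stdGaussianPDF t) + ∫ t in Ioi (0:ℝ), stdGaussianPDF t = 1 := by
    rw [intervalIntegral.integral_Iic_add_Ioi pdf_integrable.integrableOn
      pdf_integrable.integrableOn]
    exact integral_gaussianPDFReal_eq_one 0 one_ne_zero
  have h2 : (∫ t in Iic (0:ℝ), stdGaussianPDF t) = ∫ t in Ioi (0:ℝ), stdGaussianPDF t := by
    have heven : ∀ t : ℝ, stdGaussianPDF (-t) = stdGaussianPDF t := by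
      intro t
      simp [stdGaussianPDF, gaussianPDFReal, neg_sq]
    rw [← neg_zero, ← integral_comp_neg_Iic (0:ℝ) stdGaussianPDF]
    simp_rw [heven]
    rw [neg_zero]
  rw [cdf_eq]
  linarith

lemma cdf_tendsto_one : Filter.Tendsto stdGaussianCDF Filter.atTop (nhds 1) := by
  have h := tendsto_measure_Iic_atTop (gaussianReal 0 1)
  rw [measure_univ] at h
  have := (ENNReal.tendsto_toReal (by norm_num)).comp h
  exact this

lemma cdf_surj {p : ℝ} (hp1 : 1/2 ≤ p) (hp2 : p < 1) : ∃ q : ℝ, stdGaussianCDF q = p := by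
  obtain ⟨B, hB'⟩ := (cdf_tendsto_one.eventually (eventually_gt_nhds hp2)).exists
  have hB : p ≤ stdGaussianCDF B := hB'.le
  by_cases hB0 : 0 ≤ B
  · have := intermediate_value_Icc hB0 cdf_continuous.continuousOn
    have hmem : p ∈ Icc (stdGaussianCDF 0) (stdGaussianCDF B) := by
      rw [cdf_zero]; exact ⟨hp1, hB⟩
    obtain ⟨q, _, hq⟩ := this hmem
    exact ⟨q, hq⟩
  · exfalso
    have : stdGaussianCDF B < stdGaussianCDF 0 := cdf_strictMono (by linarith)
    rw [cdf_zero] at this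
    linarith

lemma quantile_spec {p : ℝ} (hp1 : 1/2 ≤ p) (hp2 : p < 1) :
    stdGaussianCDF (stdGaussianQuantile p) = p :=
  Function.invFun_eq (cdf_surj hp1 hp2)

/-- for 0.5 < x < y ≤ ȳ < 1,
`1/Φ⁻¹(x)² − 1/Φ⁻¹(y)² ≤ (2·Φ⁻¹(ȳ) / (φ(Φ⁻¹(ȳ)) · Φ⁻¹(x)⁴)) · (y − x)`. -/
theorem stmt_0 (x y ybar : ℝ) (hx : (0.5 : ℝ) < x) (hxy : x < y) (hyybar : y ≤ ybar)
    (hybar : ybar < 1) :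
    1 / stdGaussianQuantile x ^ 2 - 1 / stdGaussianQuantile y ^ 2 ≤
      2 * stdGaussianQuantile ybar /
        (stdGaussianPDF (stdGaussianQuantile ybar) * stdGaussianQuantile x ^ 4) * (y - x) := by
  set a := stdGaussianQuantile x
  set b := stdGaussianQuantile y
  set c := stdGaussianQuantile ybar
  have hxn : (0.5:ℝ) = 1/2 := by norm_num
  have ha : stdGaussianCDF a = x := quantile_spec (by linarith) (by linarith)
  have hb : stdGaussianCDF b = y := quantile_spec (by linarith) (by linarith)
  have hc : stdGaussianCDF c = ybar := quantile_spec (by linarith) hybar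
  have ha0 : 0 < a := by
    by_contra h
    push_neg at h
    have := cdf_strictMono.monotone h
    rw [ha, cdf_zero] at this
    linarith
  have hab : a < b := by
    by_contra h
    push_neg at h
    have := cdf_strictMono.monotone h
    rw [ha, hb] at this
    linarith
  have hbc : b ≤ c := by
    by_contra h
    push_neg at h
    have := cdf_strictMono h
    rw [hb, hc] at this
    linarith
  set φ := stdGaussianPDF c with hφdef
  have hφ : 0 < φ := pdf_pos c
  -- pdf lower bound on [a, b]
  have hlow : ∀ t ∈ Icc a b, φ ≤ stdGaussianPDF t := by
    intro t ht
    have ht1 : 0 < t := lt_of_lt_of_le ha0 ht.1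
    have ht2 : t ≤ c := le_trans ht.2 hbc
    have hsq : t^2 ≤ c^2 := by nlinarith
    rw [hφdef, pdf_formula, pdf_formula]
    have hexp : Real.exp (-(c^2) / 2) ≤ Real.exp (-(t^2) / 2) := by
      apply Real.exp_le_exp.mpr
      linarith
    have hs : (0:ℝ) ≤ (Real.sqrt (2 * Real.pi))⁻¹ := by positivity
    exact mul_le_mul_of_nonneg_left hexp hs
  -- MVT-style bound: (b - a) * φ ≤ y - x
  have hkey : (b - a) * φ ≤ y - x := by
    have h1 : y - x = ∫ t in a..b, stdGaussianPDF t := by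
      rw [← ha, ← hb, cdf_sub]
    have h2 : (∫ t in a..b, (fun _ => φ) t) ≤ ∫ t in a..b, stdGaussianPDF t := by
      apply intervalIntegral.integral_mono_on hab.le
        (intervalIntegrable_const) (pdf_integrable.intervalIntegrable)
      intro t ht
      exact hlow t ht
    rw [intervalIntegral.integral_const, smul_eq_mul, mul_comm] at h2
    linarith
  have hac : a ≤ c := le_trans hab.le hbc
  have hb0 : 0 < b := lt_trans ha0 hab
  have hc0 : 0 < c := lt_of_lt_of_le hb0 hbc
  have hdiff : 1 / a ^ 2 - 1 / b ^ 2 = (b - a) * (b + a) / (a ^ 2 * b ^ 2) := by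
    field_simp
    ring
  rw [hdiff, div_mul_eq_mul_div, div_le_div_iff₀ (by positivity) (by positivity)]
  have hyx : (0:ℝ) ≤ y - x := by linarith
  have hA : (b - a) * φ * a ^ 4 * (b + a) ≤ (b - a) * φ * a ^ 4 * (2 * c) :=
    mul_le_mul_of_nonneg_left (show b + a ≤ 2 * c by linarith)
      (mul_nonneg (mul_nonneg (by linarith) hφ.le) (by positivity))
  have hB : (b - a) * φ * (2 * c * a ^ 4) ≤ (y - x) * (2 * c * a ^ 4) :=
    mul_le_mul_of_nonneg_right hkey (by positivity)
  have hC : 2 * c * (y - x) * a ^ 2 * a ^ 2 ≤ 2 * c * (y - x) * a ^ 2 * b ^ 2 :=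
    mul_le_mul_of_nonneg_left (by nlinarith)
      (mul_nonneg (mul_nonneg (by positivity) hyx) (by positivity))
  nlinarith [hA, hB, hC]
end

section
/- Let z_1,…,z_T ∈ ℝ^d, λ > 0, and let V_t = λ·I + ∑_{s=1}^{t} z_s z_sᵀ. For any t, t' ∈ {1,…,T} with t ≥ t', it holds that log(det(V_t)/det(V_{t'})) ≤ (1/λ) · ∑_{s=t'+1}^{t} ‖z_s‖². -/
/-- The Euclidean norm of a vector given as a finitely-indexed family of reals. -/
noncomputable def euclNorm {ι : Type*} [Fintype ι] (v : ι → ℝ) : ℝ :=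
  Real.sqrt (∑ i, v i ^ 2)

section aux

open Matrix Finset

variable {d : ℕ}

lemma aux_vecMulVec_mulVec (v w x : Fin d → ℝ) :
    Matrix.vecMulVec w v *ᵥ x = (v ⬝ᵥ x) • w := by
  ext i
  simp [Matrix.vecMulVec, Matrix.mulVec, dotProduct, Finset.mul_sum, mul_assoc,
    mul_comm, mul_left_comm]

lemma aux_quad_sum (t : ℕ) (z : ℕ → Fin d → ℝ) (x : Fin d → ℝ) :
    x ⬝ᵥ ((∑ s ∈ Finset.Icc 1 t, Matrix.vecMulVec (z s) (z s)) *ᵥ x)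
      = ∑ s ∈ Finset.Icc 1 t, (z s ⬝ᵥ x) ^ 2 := by
  have hms : (∑ s ∈ Finset.Icc 1 t, Matrix.vecMulVec (z s) (z s)) *ᵥ x
      = ∑ s ∈ Finset.Icc 1 t, Matrix.vecMulVec (z s) (z s) *ᵥ x :=
    map_sum (Matrix.mulVec.addMonoidHomLeft x) _ _
  have h2 : x ⬝ᵥ ∑ s ∈ Finset.Icc 1 t, Matrix.vecMulVec (z s) (z s) *ᵥ x
      = ∑ s ∈ Finset.Icc 1 t, x ⬝ᵥ (Matrix.vecMulVec (z s) (z s) *ᵥ x) := by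
    simp only [dotProduct, Finset.sum_apply, Finset.mul_sum]
    exact Finset.sum_comm
  rw [hms, h2]
  refine Finset.sum_congr rfl fun s _ => ?_
  rw [aux_vecMulVec_mulVec, dotProduct_smul, dotProduct_comm, smul_eq_mul, sq]

lemma aux_quad (lam : ℝ) (t : ℕ) (z : ℕ → Fin d → ℝ) (x : Fin d → ℝ) :
    x ⬝ᵥ ((lam • (1 : Matrix (Fin d) (Fin d) ℝ) +
      ∑ s ∈ Finset.Icc 1 t, Matrix.vecMulVec (z s) (z s)) *ᵥ x)
      = lam * (x ⬝ᵥ x) + ∑ s ∈ Finset.Icc 1 t, (z s ⬝ᵥ x) ^ 2 := by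
  rw [Matrix.add_mulVec, dotProduct_add, aux_quad_sum,
    Matrix.smul_mulVec, Matrix.one_mulVec, dotProduct_smul, smul_eq_mul]

lemma aux_posdef (lam : ℝ) (hlam : 0 < lam) (t : ℕ) (z : ℕ → Fin d → ℝ) :
    (lam • (1 : Matrix (Fin d) (Fin d) ℝ) +
      ∑ s ∈ Finset.Icc 1 t, Matrix.vecMulVec (z s) (z s)).PosDef := by
  rw [Matrix.posDef_iff_dotProduct_mulVec]
  constructor
  · refine Matrix.IsHermitian.add ?_ ?_
    · show _ = _
      rw [Matrix.conjTranspose_smul, Matrix.conjTranspose_one]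
      simp
    · show _ = _
      rw [Matrix.conjTranspose_sum]
      refine Finset.sum_congr rfl fun s _ => ?_
      ext i j
      simp [Matrix.vecMulVec, mul_comm]
  · intro x hx
    have hsq : 0 < x ⬝ᵥ x := by
      simpa using dotProduct_star_self_pos_iff.mpr hx
    have := aux_quad lam t z x
    simp only [star_trivial]
    rw [this]
    have hge : 0 ≤ ∑ s ∈ Finset.Icc 1 t, (z s ⬝ᵥ x) ^ 2 :=
      Finset.sum_nonneg fun s _ => sq_nonneg _
    nlinarith

lemma aux_det_step (B : Matrix (Fin d) (Fin d) ℝ) (hB : B.PosDef) (v : Fin d → ℝ) :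
    (B + Matrix.vecMulVec v v).det = B.det * (1 + v ⬝ᵥ (B⁻¹ *ᵥ v)) := by
  have hdet : IsUnit B.det := isUnit_iff_ne_zero.mpr hB.det_pos.ne'
  have h1 : B * B⁻¹ = 1 := Matrix.mul_nonsing_inv B hdet
  have key : B + Matrix.vecMulVec v v
      = B * (1 + Matrix.replicateCol (Fin 1) (B⁻¹ *ᵥ v) * Matrix.replicateRow (Fin 1) v) := by
    rw [Matrix.mul_add, mul_one, Matrix.replicateCol_mulVec, ← Matrix.mul_assoc, ← Matrix.mul_assoc,
      h1, Matrix.one_mul, Matrix.vecMulVec_eq (Fin 1)]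
    rfl
  rw [key, Matrix.det_mul]
  erw [Matrix.det_one_add_replicateCol_mul_replicateRow]

lemma aux_q_bound (lam : ℝ) (hlam : 0 < lam) (t : ℕ) (z : ℕ → Fin d → ℝ) (v : Fin d → ℝ) :
    0 ≤ v ⬝ᵥ ((lam • (1 : Matrix (Fin d) (Fin d) ℝ) +
        ∑ s ∈ Finset.Icc 1 t, Matrix.vecMulVec (z s) (z s))⁻¹ *ᵥ v) ∧
    v ⬝ᵥ ((lam • (1 : Matrix (Fin d) (Fin d) ℝ) +
        ∑ s ∈ Finset.Icc 1 t, Matrix.vecMulVec (z s) (z s))⁻¹ *ᵥ v) ≤ (v ⬝ᵥ v) / lam := by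
  set B := lam • (1 : Matrix (Fin d) (Fin d) ℝ) +
      ∑ s ∈ Finset.Icc 1 t, Matrix.vecMulVec (z s) (z s) with hBdef
  have hB : B.PosDef := aux_posdef lam hlam t z
  have hdet : IsUnit B.det := isUnit_iff_ne_zero.mpr hB.det_pos.ne'
  set w := B⁻¹ *ᵥ v with hw
  have hBw : B *ᵥ w = v := by
    rw [hw, Matrix.mulVec_mulVec, Matrix.mul_nonsing_inv B hdet, Matrix.one_mulVec]
  -- q = v ⬝ᵥ w
  have hq : v ⬝ᵥ w = lam * (w ⬝ᵥ w) + ∑ s ∈ Finset.Icc 1 t, (z s ⬝ᵥ w) ^ 2 := by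
    calc v ⬝ᵥ w = w ⬝ᵥ (B *ᵥ w) := by rw [hBw, dotProduct_comm]
    _ = _ := aux_quad lam t z w
  have hsum : 0 ≤ ∑ s ∈ Finset.Icc 1 t, (z s ⬝ᵥ w) ^ 2 :=
    Finset.sum_nonneg fun s _ => sq_nonneg _
  have hww : 0 ≤ w ⬝ᵥ w := Finset.sum_nonneg fun i _ => mul_self_nonneg _
  have hvv : 0 ≤ v ⬝ᵥ v := Finset.sum_nonneg fun i _ => mul_self_nonneg _
  have hqnn : 0 ≤ v ⬝ᵥ w := by nlinarith
  refine ⟨hqnn, ?_⟩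
  -- Cauchy-Schwarz
  have hCS : (v ⬝ᵥ w) ^ 2 ≤ (v ⬝ᵥ v) * (w ⬝ᵥ w) := by
    have h := Finset.sum_mul_sq_le_sq_mul_sq Finset.univ v w
    have e1 : v ⬝ᵥ w = ∑ i, v i * w i := rfl
    have e2 : v ⬝ᵥ v = ∑ i, v i ^ 2 := by
      simp [dotProduct, pow_two]
    have e3 : w ⬝ᵥ w = ∑ i, w i ^ 2 := by
      simp [dotProduct, pow_two]
    rw [e1, e2, e3]
    exact h
  have hlaww : lam * (w ⬝ᵥ w) ≤ v ⬝ᵥ w := by nlinarith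
  rcases eq_or_lt_of_le hqnn with h0 | hpos
  · rw [← h0]; positivity
  · rw [le_div_iff₀ hlam]
    nlinarith
lemma aux_norm_sq (v : Fin d → ℝ) : euclNorm v ^ 2 = v ⬝ᵥ v := by
  rw [euclNorm, Real.sq_sqrt (Finset.sum_nonneg fun i _ => sq_nonneg _)]
  simp [dotProduct, pow_two]

end aux

/-- with `V t = λ·I + ∑_{s=1}^t z_s z_sᵀ`, for `1 ≤ t' ≤ t ≤ T`,
`log(det V_t / det V_{t'}) ≤ (1/λ) ∑_{s=t'+1}^t ‖z_s‖²`. -/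
theorem stmt_2 {d : ℕ} (T : ℕ) (z : ℕ → Fin d → ℝ) (lam : ℝ) (hlam : 0 < lam)
    (V : ℕ → Matrix (Fin d) (Fin d) ℝ)
    (hV : ∀ t, V t = lam • (1 : Matrix (Fin d) (Fin d) ℝ) +
      ∑ s ∈ Finset.Icc 1 t, Matrix.vecMulVec (z s) (z s))
    (t t' : ℕ) (ht'1 : 1 ≤ t') (ht't : t' ≤ t) (htT : t ≤ T) :
    Real.log ((V t).det / (V t').det) ≤
      (1 / lam) * ∑ s ∈ Finset.Icc (t' + 1) t, euclNorm (z s) ^ 2 := by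
  have hPD : ∀ m, (V m).PosDef := fun m => (hV m) ▸ aux_posdef lam hlam m z
  have hdetpos : ∀ m, 0 < (V m).det := fun m => (hPD m).det_pos
  obtain ⟨n, rfl⟩ : ∃ n, t = t' + n := ⟨t - t', (Nat.add_sub_cancel' ht't).symm⟩
  clear ht't htT
  induction n with
  | zero =>
    simp only [Nat.add_zero, div_self (hdetpos t').ne', Real.log_one]
    positivity
  | succ n ih =>
    rw [show t' + (n + 1) = t' + n + 1 by omega]
    have hstep : V (t' + n + 1) = V (t' + n) + Matrix.vecMulVec (z (t' + n + 1)) (z (t' + n + 1)) := by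
      rw [hV (t' + n + 1), hV (t' + n),
        Finset.sum_Icc_succ_top (Nat.le_add_left 1 (t' + n)), ← add_assoc]
    have hdetstep := aux_det_step (V (t' + n)) (hPD (t' + n)) (z (t' + n + 1))
    set q := dotProduct (z (t' + n + 1)) (Matrix.mulVec (V (t' + n))⁻¹ (z (t' + n + 1))) with hqdef
    have hqb := aux_q_bound lam hlam (t' + n) z (z (t' + n + 1))
    rw [← hV] at hqb
    obtain ⟨hq0, hq1⟩ := hqb
    have hratio : (V (t' + n + 1)).det / (V t').det
        = ((V (t' + n)).det / (V t').det) * (1 + q) := by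
      rw [hstep, hdetstep, mul_div_right_comm]
    have h1q : (0 : ℝ) < 1 + q := by linarith
    have hlog : Real.log ((V (t' + n + 1)).det / (V t').det)
        = Real.log ((V (t' + n)).det / (V t').det) + Real.log (1 + q) := by
      rw [hratio, Real.log_mul (div_pos (hdetpos _) (hdetpos _)).ne' h1q.ne']
    have hlog1q : Real.log (1 + q) ≤ q := by
      have := Real.log_le_sub_one_of_pos h1q
      linarith
    have hsum : ∑ s ∈ Finset.Icc (t' + 1) (t' + n + 1), euclNorm (z s) ^ 2
        = (∑ s ∈ Finset.Icc (t' + 1) (t' + n), euclNorm (z s) ^ 2)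
          + euclNorm (z (t' + n + 1)) ^ 2 := by
      rw [Finset.sum_Icc_succ_top (by omega : t' + 1 ≤ t' + n + 1)]
    rw [hlog, hsum, mul_add]
    have hlast : q ≤ (1 / lam) * euclNorm (z (t' + n + 1)) ^ 2 := by
      rw [aux_norm_sq, one_div, inv_mul_eq_div]
      exact hq1
    have := ih
    linarith [hlog1q, hlast, this]
end

section
/- Let z_1,…,z_T ∈ ℝ^d, λ > 0, R_z > 0, and let V_t = λ·I + ∑_{s=1}^{t} z_s z_sᵀ. Suppose t' > t, ‖z_s‖ ≤ R_z for all s ∈ {t+1,…,t'}, and det(V_{t'}) ≥ 2·det(V_t). Then t' − t ≥ (log 2 / R_z²) · λ. -/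
open Matrix Finset

lemma psd_vecMulVec {d : ℕ} (z : Fin d → ℝ) : (vecMulVec z z).PosSemidef := by
  refine Matrix.PosSemidef.of_dotProduct_mulVec_nonneg ?_ ?_
  · ext i j
    simp [Matrix.IsHermitian, vecMulVec_apply, conjTranspose_apply, mul_comm]
  · intro x
    have h : dotProduct (star x) (vecMulVec z z *ᵥ x) = (∑ i, x i * z i) * (∑ j, z j * x j) := by
      simp only [dotProduct, mulVec, vecMulVec_apply, star_trivial, Finset.sum_mul_sum, dotProduct]
      congr 1; ext i; rw [Finset.mul_sum]; congr 1; ext j; ring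
    rw [h]
    have : (∑ j, z j * x j) = (∑ i, x i * z i) := by congr 1; ext i; ring
    rw [this]; exact mul_self_nonneg _

lemma posdef_lam_smul {d : ℕ} {lam : ℝ} (hlam : 0 < lam) :
    (lam • (1 : Matrix (Fin d) (Fin d) ℝ)).PosDef := by
  have : lam • (1 : Matrix (Fin d) (Fin d) ℝ) = diagonal (fun _ => lam) := by
    ext i j; by_cases h : i = j <;> simp [h, Matrix.one_apply, diagonal]
  rw [this]
  exact Matrix.PosDef.diagonal (fun _ => hlam)

-- key quadratic bound: z ⬝ᵥ (V⁻¹ *ᵥ z) ≤ (∑ z i^2)/lam when V = lam•1 + N, N PSD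
lemma quad_bound {d : ℕ} {lam : ℝ} (hlam : 0 < lam) {N : Matrix (Fin d) (Fin d) ℝ}
    (hN : N.PosSemidef) (z : Fin d → ℝ) :
    z ⬝ᵥ ((lam • (1 : Matrix (Fin d) (Fin d) ℝ) + N)⁻¹ *ᵥ z) ≤ (∑ i, z i ^ 2) / lam := by
  set V := lam • (1 : Matrix (Fin d) (Fin d) ℝ) + N with hVdef
  have hV : V.PosDef := (posdef_lam_smul hlam).add_posSemidef hN
  set w := V⁻¹ *ᵥ z with hw
  have hq0 : 0 ≤ z ⬝ᵥ w := by
    have := hV.inv.posSemidef.dotProduct_mulVec_nonneg z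
    simpa [hw] using this
  have hVw : V *ᵥ w = z := by
    rw [hw, Matrix.mulVec_mulVec, Matrix.mul_nonsing_inv _ (isUnit_iff_ne_zero.mpr hV.det_pos.ne'), Matrix.one_mulVec]
  have hwVw : w ⬝ᵥ z = z ⬝ᵥ w := dotProduct_comm _ _
  have hquad : lam * (∑ i, w i ^ 2) ≤ z ⬝ᵥ w := by
    have h1 : w ⬝ᵥ (V *ᵥ w) = z ⬝ᵥ w := by rw [hVw, hwVw]
    have h2 : w ⬝ᵥ (V *ᵥ w) = lam * (∑ i, w i ^ 2) + w ⬝ᵥ (N *ᵥ w) := by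
      rw [hVdef, Matrix.add_mulVec, dotProduct_add, Matrix.smul_mulVec,
        Matrix.one_mulVec, dotProduct_smul]
      congr 1
      simp [dotProduct, Finset.mul_sum, sq]
    have h3 : 0 ≤ w ⬝ᵥ (N *ᵥ w) := by simpa using hN.dotProduct_mulVec_nonneg w
    linarith
  have hcs : (z ⬝ᵥ w) ^ 2 ≤ (∑ i, z i ^ 2) * (∑ i, w i ^ 2) :=
    Finset.sum_mul_sq_le_sq_mul_sq Finset.univ z w
  rcases eq_or_lt_of_le hq0 with hq | hq
  · rw [← hq]; positivity
  · have hwz : (∑ i, w i ^ 2) ≤ (z ⬝ᵥ w) / lam := by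
      rw [le_div_iff₀ hlam]; linarith [hquad]
    have : (z ⬝ᵥ w) ^ 2 ≤ (∑ i, z i ^ 2) * ((z ⬝ᵥ w) / lam) := by
      refine hcs.trans (mul_le_mul_of_nonneg_left hwz (by positivity))
    rw [le_div_iff₀ hlam]
    have hS : 0 ≤ (∑ i, z i ^ 2) := by positivity
    nlinarith [this, hq]

lemma det_step {d : ℕ} {lam : ℝ} (hlam : 0 < lam) {N : Matrix (Fin d) (Fin d) ℝ}
    (hN : N.PosSemidef) (z : Fin d → ℝ) :
    (lam • (1 : Matrix (Fin d) (Fin d) ℝ) + N + vecMulVec z z).det ≤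
      (lam • (1 : Matrix (Fin d) (Fin d) ℝ) + N).det * (1 + (∑ i, z i ^ 2) / lam) := by
  set A := lam • (1 : Matrix (Fin d) (Fin d) ℝ) + N with hA
  have hApd : A.PosDef := (posdef_lam_smul hlam).add_posSemidef hN
  have hdetA : IsUnit A.det := isUnit_iff_ne_zero.mpr hApd.det_pos.ne'
  rw [vecMulVec_eq (Fin 1) z z, Matrix.det_add_replicateCol_mul_replicateRow hdetA]
  refine mul_le_mul_of_nonneg_left ?_ hApd.det_pos.le
  have hdu : ∀ (M : Matrix (Fin 1) (Fin 1) ℝ),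
      @Matrix.det (Fin 1) (fun a b => decidableEq_of_subsingleton a b)
        (@Unique.fintype (Fin 1) Fin.instUnique) ℝ _ M = M 0 0 :=
    fun M => @Matrix.det_unique ℝ _ (Fin 1) _ _ _ M
  rw [hdu]
  have hentry : ((1 + replicateRow (Fin 1) z * A⁻¹ * replicateCol (Fin 1) z : Matrix (Fin 1) (Fin 1) ℝ)) 0 0
      = 1 + z ⬝ᵥ (A⁻¹ *ᵥ z) := by
    simp [Matrix.mul_apply, Matrix.replicateRow_apply, Matrix.replicateCol_apply, Matrix.one_apply,
      dotProduct, Matrix.mulVec, dotProduct, Finset.mul_sum, Finset.sum_mul]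
    rw [Finset.sum_comm]
    congr 1; ext i; congr 1; ext j; ring
  refine le_of_eq_of_le hentry ?_
  have := quad_bound hlam hN z
  linarith [this]


lemma psd_sum {d : ℕ} (z : ℕ → Fin d → ℝ) (F : Finset ℕ) :
    (∑ s ∈ F, vecMulVec (z s) (z s)).PosSemidef := by
  classical
  induction F using Finset.induction with
  | empty => simpa using Matrix.PosSemidef.zero
  | insert a s hnot ih =>
    rw [Finset.sum_insert hnot]
    exact (psd_vecMulVec _).add ih

/-- with `V t = λ·I + ∑_{s=1}^t z_s z_sᵀ`, if `t' > t`, `‖z_s‖ ≤ R_z` for all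
`s ∈ {t+1,…,t'}`, and `det(V_{t'}) ≥ 2·det(V_t)`, then `t' − t ≥ (log 2 / R_z²)·λ`. -/
theorem stmt_3 {d : ℕ} (T : ℕ) (z : ℕ → Fin d → ℝ) (lam Rz : ℝ) (hlam : 0 < lam) (hRz : 0 < Rz)
    (V : ℕ → Matrix (Fin d) (Fin d) ℝ)
    (hV : ∀ t, V t = lam • (1 : Matrix (Fin d) (Fin d) ℝ) +
      ∑ s ∈ Finset.Icc 1 t, Matrix.vecMulVec (z s) (z s))
    (t t' : ℕ) (ht : t < t') (h1t : 1 ≤ t) (ht'T : t' ≤ T)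
    (hz : ∀ s ∈ Finset.Icc (t + 1) t', euclNorm (z s) ≤ Rz)
    (hdet : 2 * (V t).det ≤ (V t').det) :
    Real.log 2 / Rz ^ 2 * lam ≤ (t' : ℝ) - (t : ℝ) := by
  set c : ℝ := Rz ^ 2 / lam with hc
  have hc0 : 0 ≤ c := by positivity
  -- positivity of det (V t)
  have hVpd : ∀ n, (V n).PosDef := by
    intro n
    rw [hV n]
    exact (posdef_lam_smul hlam).add_posSemidef (psd_sum z _)
  -- step bound
  have hstep : ∀ k, t ≤ k → k + 1 ≤ t' → (V (k + 1)).det ≤ (V k).det * (1 + c) := by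
    intro k hk hk'
    have hnorm : (∑ i, z (k + 1) i ^ 2) ≤ Rz ^ 2 := by
      have hmem : k + 1 ∈ Finset.Icc (t + 1) t' := by
        rw [Finset.mem_Icc]; omega
      have := hz _ hmem
      unfold euclNorm at this
      have h0 : (0:ℝ) ≤ ∑ i, z (k + 1) i ^ 2 := by positivity
      calc (∑ i, z (k + 1) i ^ 2) = Real.sqrt (∑ i, z (k + 1) i ^ 2) ^ 2 := (Real.sq_sqrt h0).symm
        _ ≤ Rz ^ 2 := by
            have := Real.sqrt_nonneg (∑ i, z (k + 1) i ^ 2)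
            nlinarith [hz _ hmem]
    have hVk1 : V (k + 1) = V k + vecMulVec (z (k + 1)) (z (k + 1)) := by
      rw [hV (k + 1), hV k, Finset.sum_Icc_succ_top (by omega : 1 ≤ k + 1)]
      rw [add_assoc]
    have hd := det_step hlam (psd_sum z (Finset.Icc 1 k)) (z (k + 1))
    rw [← hV k] at hd
    rw [hVk1]
    refine hd.trans ?_
    have hdpos : 0 < (V k).det := (hVpd k).det_pos
    have : (∑ i, z (k + 1) i ^ 2) / lam ≤ c := by
      rw [hc]; gcongr
    nlinarith [hdpos, this]
  -- induction
  have hind : ∀ n, t + n ≤ t' → (V (t + n)).det ≤ (V t).det * (1 + c) ^ n := by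
    intro n
    induction n with
    | zero => intro _; simp
    | succ m ih =>
      intro hle
      have h1 : (V (t + m + 1)).det ≤ (V (t + m)).det * (1 + c) :=
        hstep (t + m) (by omega) (by omega)
      have h2 := ih (by omega)
      have h3 : (0:ℝ) ≤ 1 + c := by linarith
      calc (V (t + (m + 1))).det = (V (t + m + 1)).det := by ring_nf
        _ ≤ (V (t + m)).det * (1 + c) := h1
        _ ≤ (V t).det * (1 + c) ^ m * (1 + c) := by
            exact mul_le_mul_of_nonneg_right h2 h3
        _ = (V t).det * (1 + c) ^ (m + 1) := by ring
  -- conclude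
  set m := t' - t with hm
  have hmt : t + m = t' := by omega
  have hkey : 2 ≤ (1 + c) ^ m := by
    have := hind m (by omega)
    rw [hmt] at this
    have hdpos : 0 < (V t).det := (hVpd t).det_pos
    nlinarith [hdet, this, hdpos]
  have hexp : (1 + c) ^ m ≤ Real.exp (m * c) := by
    calc (1 + c) ^ m ≤ Real.exp c ^ m := by
          refine pow_le_pow_left₀ (by linarith) ?_ m
          linarith [Real.add_one_le_exp c]
      _ = Real.exp (m * c) := by rw [← Real.exp_nat_mul]
  have hlog : Real.log 2 ≤ m * c := by
    have h2 : (2:ℝ) ≤ Real.exp (m * c) := hkey.trans hexp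
    calc Real.log 2 ≤ Real.log (Real.exp (m * c)) :=
          Real.log_le_log (by norm_num) h2
      _ = m * c := Real.log_exp _
  have hmcast : (m : ℝ) = (t' : ℝ) - (t : ℝ) := by
    rw [hm, Nat.cast_sub ht.le]
  rw [← hmcast]
  rw [div_mul_eq_mul_div, div_le_iff₀ (by positivity)]
  have : Real.log 2 * lam ≤ m * c * lam := by
    have : 0 < lam := hlam
    nlinarith [hlog]
  calc Real.log 2 * lam ≤ m * c * lam := this
    _ = (m:ℝ) * Rz ^ 2 := by
        rw [hc]; field_simp
end

section
/- Let z_1,…,z_T ∈ ℝ^d, λ > 0, R_z > 0, ρ ≥ 1 a natural number with λ ≥ R_z²·ρ/log 2, and let V_t = λ·I + ∑_{s=1}^{t} z_s z_sᵀ. If t ≥ ρ + 1 and ‖z_s‖ ≤ R_z for all s ∈ {t−ρ+1,…,t}, then V_t ⪯ 2·V_{t−ρ}. -/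
open Matrix

lemma quad_vecMulVec {d : ℕ} (v x : Fin d → ℝ) :
    x ⬝ᵥ (Matrix.vecMulVec v v *ᵥ x) = (v ⬝ᵥ x) ^ 2 := by
  have h1 : Matrix.vecMulVec v v *ᵥ x = (v ⬝ᵥ x) • v := by
    ext i
    simp only [Matrix.mulVec, Matrix.vecMulVec_apply, dotProduct, Pi.smul_apply,
      smul_eq_mul, Finset.sum_mul]
    exact Finset.sum_congr rfl fun j _ => by ring
  rw [h1, dotProduct_smul, dotProduct_comm, smul_eq_mul, sq]

/-- with `V t = λ·I + ∑_{s=1}^t z_s z_sᵀ`, if `ρ ≥ 1`, `λ ≥ R_z²·ρ/log 2`,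
`t ≥ ρ + 1` and `‖z_s‖ ≤ R_z` for `s ∈ {t−ρ+1,…,t}`, then `V_t ⪯ 2·V_{t−ρ}`. -/
theorem stmt_4 {d : ℕ} (T : ℕ) (z : ℕ → Fin d → ℝ) (lam Rz : ℝ) (hlam : 0 < lam) (hRz : 0 < Rz)
    (ρ : ℕ) (hρ : 1 ≤ ρ) (hlamρ : Rz ^ 2 * (ρ : ℝ) / Real.log 2 ≤ lam)
    (V : ℕ → Matrix (Fin d) (Fin d) ℝ)
    (hV : ∀ t, V t = lam • (1 : Matrix (Fin d) (Fin d) ℝ) +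
      ∑ s ∈ Finset.Icc 1 t, Matrix.vecMulVec (z s) (z s))
    (t : ℕ) (ht : ρ + 1 ≤ t) (htT : t ≤ T)
    (hz : ∀ s ∈ Finset.Icc (t - ρ + 1) t, euclNorm (z s) ≤ Rz) :
    ((2 : ℝ) • V (t - ρ) - V t).PosSemidef := by
  set a := t - ρ with ha
  have hρt : ρ ≤ t := le_trans (Nat.le_succ ρ) ht
  have hat : a ≤ t := Nat.sub_le t ρ
  have hta : t - a = ρ := by omega
  -- quadratic form of V u
  have hq : ∀ u, ∀ x : Fin d → ℝ, x ⬝ᵥ (V u *ᵥ x)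
      = lam * (∑ i, x i ^ 2) + ∑ s ∈ Finset.Icc 1 u, (z s ⬝ᵥ x) ^ 2 := by
    intro u x
    rw [hV u, Matrix.add_mulVec, dotProduct_add]
    congr 1
    · rw [Matrix.smul_mulVec, Matrix.one_mulVec, dotProduct_smul]
      simp [dotProduct, Finset.mul_sum, sq]
    · have hsum : (∑ s ∈ Finset.Icc 1 u, Matrix.vecMulVec (z s) (z s)) *ᵥ x
          = ∑ s ∈ Finset.Icc 1 u, Matrix.vecMulVec (z s) (z s) *ᵥ x := by
        ext i
        simp only [Matrix.mulVec, dotProduct, Matrix.sum_apply, Finset.sum_apply,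
          Finset.sum_mul]
        rw [Finset.sum_comm]
      have hdot : x ⬝ᵥ (∑ s ∈ Finset.Icc 1 u, Matrix.vecMulVec (z s) (z s) *ᵥ x)
          = ∑ s ∈ Finset.Icc 1 u, x ⬝ᵥ (Matrix.vecMulVec (z s) (z s) *ᵥ x) := by
        simp only [dotProduct, Finset.sum_apply, Finset.mul_sum]
        exact Finset.sum_comm
      rw [hsum, hdot]
      exact Finset.sum_congr rfl fun s _ => quad_vecMulVec _ _
  -- Hermitian part
  have hVsym : ∀ u i j, V u j i = V u i j := by
    intro u i j
    rw [hV u]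
    simp only [Matrix.add_apply, Matrix.smul_apply, Matrix.one_apply, Matrix.sum_apply,
      Matrix.vecMulVec_apply, smul_eq_mul]
    congr 1
    · simp [eq_comm]
    · exact Finset.sum_congr rfl fun s _ => mul_comm _ _
  have herm : ((2 : ℝ) • V a - V t).IsHermitian := by
    refine Matrix.IsHermitian.ext fun i j => ?_
    rw [star_trivial]
    simp only [Matrix.sub_apply, Matrix.smul_apply, smul_eq_mul]
    rw [hVsym a, hVsym t]
  refine Matrix.PosSemidef.of_dotProduct_mulVec_nonneg herm fun x => ?_
  have hstar : star x = x := star_trivial x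
  rw [hstar, Matrix.sub_mulVec, dotProduct_sub, Matrix.smul_mulVec,
    dotProduct_smul, hq, hq]
  -- split the sum over Icc 1 t
  have hsplit : ∑ s ∈ Finset.Icc 1 t, (z s ⬝ᵥ x) ^ 2
      = (∑ s ∈ Finset.Icc 1 a, (z s ⬝ᵥ x) ^ 2) + ∑ s ∈ Finset.Ioc a t, (z s ⬝ᵥ x) ^ 2 := by
    rw [show Finset.Icc 1 t = Finset.Ioc 0 t from Finset.Icc_add_one_left_eq_Ioc 0 t,
      show Finset.Icc 1 a = Finset.Ioc 0 a from Finset.Icc_add_one_left_eq_Ioc 0 a,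
      Finset.sum_Ioc_consecutive _ (Nat.zero_le a) hat]
  rw [hsplit]
  -- bound each tail term
  have hX : (0:ℝ) ≤ ∑ i, x i ^ 2 := Finset.sum_nonneg fun i _ => sq_nonneg _
  have hterm : ∀ s ∈ Finset.Ioc a t, (z s ⬝ᵥ x) ^ 2 ≤ Rz ^ 2 * ∑ i, x i ^ 2 := by
    intro s hs
    have hs' : s ∈ Finset.Icc (t - ρ + 1) t := by
      simp only [Finset.mem_Ioc] at hs
      simp only [Finset.mem_Icc]
      omega
    have hzs := hz s hs'
    have hz2 : ∑ i, z s i ^ 2 ≤ Rz ^ 2 := by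
      have hnn : (0:ℝ) ≤ ∑ i, z s i ^ 2 := Finset.sum_nonneg fun i _ => sq_nonneg _
      have := Real.sq_sqrt hnn
      calc ∑ i, z s i ^ 2 = Real.sqrt (∑ i, z s i ^ 2) ^ 2 := this.symm
        _ ≤ Rz ^ 2 := by
            have : Real.sqrt (∑ i, z s i ^ 2) ≤ Rz := hzs
            exact pow_le_pow_left₀ (Real.sqrt_nonneg _) this 2
    calc (z s ⬝ᵥ x) ^ 2 ≤ (∑ i, z s i ^ 2) * ∑ i, x i ^ 2 :=
          Finset.sum_mul_sq_le_sq_mul_sq _ _ _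
      _ ≤ Rz ^ 2 * ∑ i, x i ^ 2 := mul_le_mul_of_nonneg_right hz2 hX
  have htail : ∑ s ∈ Finset.Ioc a t, (z s ⬝ᵥ x) ^ 2 ≤ (ρ : ℝ) * (Rz ^ 2 * ∑ i, x i ^ 2) := by
    calc ∑ s ∈ Finset.Ioc a t, (z s ⬝ᵥ x) ^ 2
        ≤ ∑ s ∈ Finset.Ioc a t, Rz ^ 2 * ∑ i, x i ^ 2 := Finset.sum_le_sum hterm
      _ = (ρ : ℝ) * (Rz ^ 2 * ∑ i, x i ^ 2) := by
          rw [Finset.sum_const, Nat.card_Ioc, hta, nsmul_eq_mul]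
  have hlam' : Rz ^ 2 * (ρ : ℝ) ≤ lam := by
    have hlog1 : Real.log 2 ≤ 1 := by
      nlinarith [Real.log_two_lt_d9]
    have hlog0 : 0 < Real.log 2 := Real.log_pos (by norm_num)
    have hnn : (0:ℝ) ≤ Rz ^ 2 * (ρ : ℝ) := by positivity
    calc Rz ^ 2 * (ρ : ℝ) ≤ Rz ^ 2 * (ρ : ℝ) / Real.log 2 := by
          rw [le_div_iff₀ hlog0]
          nlinarith
      _ ≤ lam := hlamρ
  have hsq : ∀ s, (0:ℝ) ≤ (z s ⬝ᵥ x) ^ 2 := fun s => sq_nonneg _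
  have hhead : (0:ℝ) ≤ ∑ s ∈ Finset.Icc 1 a, (z s ⬝ᵥ x) ^ 2 :=
    Finset.sum_nonneg fun s _ => hsq s
  rw [smul_eq_mul]
  nlinarith [mul_le_mul_of_nonneg_right hlam' hX]
end

section
/- Let M, N be symmetric d×d matrices and λ > 0 with M ⪰ N ⪰ λ·I and det(M) ≤ 2·det(N), and let z ∈ ℝ^d with ‖z‖² ≤ λ. Then M + z zᵀ ⪯ 3·N. -/
set_option maxHeartbeats 1000000

open Matrix

lemma aux_zz {d : ℕ} (lam : ℝ) (z : Fin d → ℝ) (hz : ∑ i, z i ^ 2 ≤ lam) :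
    (lam • (1 : Matrix (Fin d) (Fin d) ℝ) - vecMulVec z z).PosSemidef := by
  refine posSemidef_iff_dotProduct_mulVec.mpr ⟨?_, ?_⟩
  · unfold Matrix.IsHermitian
    ext i j
    simp [conjTranspose_apply, vecMulVec_apply, Matrix.one_apply, eq_comm, mul_comm]
  · intro x
    have hzz : x ⬝ᵥ (vecMulVec z z *ᵥ x) = (∑ i, z i * x i)^2 := by
      rw [sq, Finset.sum_mul_sum]
      simp only [dotProduct, mulVec, vecMulVec_apply, Finset.mul_sum]
      exact Finset.sum_congr rfl fun i _ => Finset.sum_congr rfl fun j _ => by ring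
    have hxx : x ⬝ᵥ x = ∑ i, x i ^ 2 := by simp [dotProduct, sq]
    have hquad : star x ⬝ᵥ ((lam • (1 : Matrix (Fin d) (Fin d) ℝ) - vecMulVec z z) *ᵥ x)
        = lam * (∑ i, x i ^ 2) - (∑ i, z i * x i) ^ 2 := by
      rw [star_trivial, sub_mulVec, dotProduct_sub, smul_mulVec, one_mulVec,
        dotProduct_smul, smul_eq_mul, hxx, hzz]
    rw [hquad]
    have hcs := Finset.sum_mul_sq_le_sq_mul_sq Finset.univ z x
    have hx2 : (0:ℝ) ≤ ∑ i, x i ^ 2 := Finset.sum_nonneg fun i _ => sq_nonneg _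
    nlinarith [sq_nonneg (∑ i, z i * x i)]

lemma key {n : Type*} [Fintype n] [DecidableEq n] {B : Matrix n n ℝ} (hB : B.IsHermitian)
    (h1 : (B - 1).PosSemidef) (hdet : B.det ≤ 2) :
    ((2 : ℝ) • (1 : Matrix n n ℝ) - B).PosSemidef := by
  have hev1 : ∀ i, 1 ≤ hB.eigenvalues i := by
    intro i
    set v : n → ℝ := ⇑(hB.eigenvectorBasis i) with hv
    have h0 := h1.dotProduct_mulVec_nonneg v
    have hmv : B *ᵥ v = hB.eigenvalues i • v := hB.mulVec_eigenvectorBasis i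
    have hnorm : v ⬝ᵥ v = 1 := by
      have h := hB.eigenvectorBasis.orthonormal.1 i
      rw [EuclideanSpace.norm_eq] at h
      have hnn : (0:ℝ) ≤ ∑ j, ‖hB.eigenvectorBasis i j‖^2 :=
        Finset.sum_nonneg fun _ _ => sq_nonneg _
      have h2 : ∑ j, ‖hB.eigenvectorBasis i j‖^2 = 1 := by
        nlinarith [Real.sq_sqrt hnn]
      simpa [dotProduct, Real.norm_eq_abs, sq_abs, sq, hv] using h2
    rw [sub_mulVec, one_mulVec, dotProduct_sub, star_trivial, hmv, dotProduct_smul,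
      hnorm, smul_eq_mul, mul_one] at h0
    linarith
  have hprod : ∏ i, hB.eigenvalues i = B.det := by
    have := hB.det_eq_prod_eigenvalues
    simpa using this.symm
  have hev2 : ∀ j, hB.eigenvalues j ≤ 2 := by
    intro j
    have hrest : (1:ℝ) ≤ ∏ i ∈ Finset.univ.erase j, hB.eigenvalues i := by
      calc (1:ℝ) = ∏ _i ∈ Finset.univ.erase j, (1:ℝ) := by simp
        _ ≤ _ := Finset.prod_le_prod (fun i _ => zero_le_one) (fun i _ => hev1 i)
    have hmul := Finset.mul_prod_erase Finset.univ hB.eigenvalues (Finset.mem_univ j)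
    nlinarith [hev1 j]
  set U : Matrix n n ℝ := (hB.eigenvectorUnitary : Matrix n n ℝ) with hUdef
  have hU : U * star U = 1 := Matrix.mem_unitaryGroup_iff.mp hB.eigenvectorUnitary.2
  have hspec : B = U * diagonal hB.eigenvalues * star U := by
    have := hB.spectral_theorem
    rwa [RCLike.ofReal_real_eq_id, Function.id_comp] at this
  have h2 : U * diagonal (fun _ => (2:ℝ)) * star U = (2:ℝ) • (1 : Matrix n n ℝ) := by
    calc U * diagonal (fun _ => (2:ℝ)) * star U = (2:ℝ) • (U * star U) := by
          rw [← smul_one_eq_diagonal, mul_smul_comm, mul_one, smul_mul_assoc]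
      _ = (2:ℝ) • 1 := by rw [hU]
  have hdiag : ((2 : ℝ) • (1 : Matrix n n ℝ) - B)
      = U * diagonal (fun i => 2 - hB.eigenvalues i) * star U := by
    calc (2 : ℝ) • (1 : Matrix n n ℝ) - B
        = U * diagonal (fun _ => (2:ℝ)) * star U - U * diagonal hB.eigenvalues * star U := by
          rw [h2, ← hspec]
      _ = U * (diagonal (fun _ => (2:ℝ)) - diagonal hB.eigenvalues) * star U := by
          rw [mul_sub, sub_mul]
      _ = U * diagonal (fun i => 2 - hB.eigenvalues i) * star U := by
          congr 2
          ext i j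
          simp [diagonal_apply]
          split <;> simp
  rw [hdiag]
  have hD : PosSemidef (diagonal (fun i => 2 - hB.eigenvalues i)) :=
    PosSemidef.diagonal fun i => by
      simp only [Pi.zero_apply]; linarith [hev2 i]
  simpa [star_eq_conjTranspose] using hD.mul_mul_conjTranspose_same U

open scoped MatrixOrder in
lemma sqrt_aux {d : ℕ} (N : Matrix (Fin d) (Fin d) ℝ) (h : N.PosSemidef) :
    ∃ S : Matrix (Fin d) (Fin d) ℝ, S.PosSemidef ∧ S * S = N :=
  ⟨CFC.sqrt N, (CFC.sqrt_nonneg N).posSemidef, CFC.sqrt_mul_sqrt_self N h.nonneg⟩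

/-- if `M ⪰ N ⪰ λ·I` are symmetric, `det M ≤ 2·det N`, and `‖z‖² ≤ λ`,
then `M + z zᵀ ⪯ 3·N`. -/
theorem stmt_5 {d : ℕ} (M N : Matrix (Fin d) (Fin d) ℝ) (hMsymm : M.IsSymm) (hNsymm : N.IsSymm)
    (lam : ℝ) (hlam : 0 < lam)
    (hMN : (M - N).PosSemidef) (hNlam : (N - lam • (1 : Matrix (Fin d) (Fin d) ℝ)).PosSemidef)
    (hdet : M.det ≤ 2 * N.det) (z : Fin d → ℝ) (hz : euclNorm z ^ 2 ≤ lam) :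
    ((3 : ℝ) • N - (M + Matrix.vecMulVec z z)).PosSemidef := by
  have hN : N.PosDef := by
    have hlamI : (lam • (1 : Matrix (Fin d) (Fin d) ℝ)).PosDef := by
      rw [smul_one_eq_diagonal]
      exact PosDef.diagonal (fun i => hlam)
    have h := hlamI.add_posSemidef hNlam
    have he : lam • (1 : Matrix (Fin d) (Fin d) ℝ) + (N - lam • 1) = N := by module
    rwa [he] at h
  have hNpsd := hN.posSemidef
  obtain ⟨S, hSpsd, hSS⟩ := sqrt_aux N hNpsd
  have hdetN : 0 < N.det := hN.det_pos
  have hSdetsq : S.det * S.det = N.det := by rw [← det_mul, hSS]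
  have hdSne : S.det ≠ 0 := by
    intro h; rw [h, mul_zero] at hSdetsq; exact hdetN.ne hSdetsq
  have hdetS : IsUnit S.det := isUnit_iff_ne_zero.mpr hdSne
  have hSinv : S * S⁻¹ = 1 := mul_nonsing_inv _ hdetS
  have hinvS : S⁻¹ * S = 1 := nonsing_inv_mul _ hdetS
  have hSherm : S.IsHermitian := hSpsd.1
  have hSinvh : (S⁻¹).IsHermitian := hSherm.inv
  have hMherm : M.IsHermitian := by
    ext i j
    simp only [conjTranspose_apply, star_trivial]
    exact congrFun (congrFun hMsymm i) j
  set B := S⁻¹ * M * S⁻¹ with hBdef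
  have hBherm : B.IsHermitian := by
    rw [Matrix.IsHermitian, hBdef, conjTranspose_mul, conjTranspose_mul, hSinvh.eq, hMherm.eq,
      Matrix.mul_assoc]
  have hid : S⁻¹ * N * S⁻¹ = 1 := by
    rw [← hSS, ← Matrix.mul_assoc, hinvS, Matrix.one_mul, hSinv]
  have h1 : (B - 1).PosSemidef := by
    have h := hMN.conjTranspose_mul_mul_same S⁻¹
    rw [hSinvh.eq] at h
    have heq : S⁻¹ * (M - N) * S⁻¹ = B - 1 := by
      rw [Matrix.mul_sub, Matrix.sub_mul, hid, hBdef]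
    rwa [heq] at h
  have hdetB : B.det ≤ 2 := by
    have h1' : B.det = S⁻¹.det * M.det * S⁻¹.det := by rw [hBdef, det_mul, det_mul]
    have h3' : S⁻¹.det = (S.det)⁻¹ := by
      rw [det_nonsing_inv, Ring.inverse_eq_inv']
    have : B.det * N.det = M.det := by
      rw [h1', h3', ← hSdetsq]; field_simp
    nlinarith
  have hKey := key hBherm h1 hdetB
  have h2NM : ((2:ℝ) • N - M).PosSemidef := by
    have hc := hKey.mul_mul_conjTranspose_same S
    rw [hSherm.eq] at hc
    have heq2 : S * ((2:ℝ) • (1 : Matrix (Fin d) (Fin d) ℝ) - B) * S = (2:ℝ) • N - M := by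
      have e1 : S * ((2:ℝ) • (1 : Matrix (Fin d) (Fin d) ℝ)) * S = (2:ℝ) • N := by
        rw [mul_smul_comm, Matrix.mul_one, smul_mul_assoc, hSS]
      have e2 : S * B * S = M := by
        rw [hBdef, ← Matrix.mul_assoc, ← Matrix.mul_assoc, hSinv, Matrix.one_mul,
          Matrix.mul_assoc, hinvS, Matrix.mul_one]
      rw [Matrix.mul_sub, Matrix.sub_mul, e1, e2]
    rwa [heq2] at hc
  have hz' : ∑ i, z i ^ 2 ≤ lam := by
    have hnn : (0:ℝ) ≤ ∑ i, z i ^ 2 := Finset.sum_nonneg fun i _ => sq_nonneg _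
    calc ∑ i, z i ^ 2 = euclNorm z ^ 2 := by rw [euclNorm, Real.sq_sqrt hnn]
      _ ≤ lam := hz
  have hzz := aux_zz lam z hz'
  have hsplit : (3 : ℝ) • N - (M + Matrix.vecMulVec z z)
      = (((2:ℝ) • N - M) + ((N - lam • 1) + (lam • (1 : Matrix (Fin d) (Fin d) ℝ) - vecMulVec z z))) := by
    module
  rw [hsplit]
  exact h2NM.add (hNlam.add hzz)
end

section
/- Let z_1,…,z_T ∈ ℝ^d with ‖z_t‖ ≤ R_z for all t ∈ {1,…,T}, let λ > 0, and let V_t = λ·I + ∑_{s=1}^{t} z_s z_sᵀ. If there exist indices 1 ≤ t_1 < t_2 < … < t_N ≤ T such that det(V_{t_{k+1}}) ≥ 2·det(V_{t_k}) for all k ∈ {1,…,N−1}, then N ≤ 1 + 2·d·log(1 + R_z²·T/(d·λ)). -/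
open Matrix in
lemma psd_vvt {d : ℕ} (v : Fin d → ℝ) : (Matrix.vecMulVec v v).PosSemidef := by
  rw [Matrix.vecMulVec_eq Unit]
  have : Matrix.replicateCol Unit v = (Matrix.replicateRow Unit v)ᴴ := by
    rw [Matrix.conjTranspose_replicateRow]; simp
  rw [this]
  exact Matrix.posSemidef_conjTranspose_mul_self _

lemma eig_ge {d : ℕ} {A : Matrix (Fin d) (Fin d) ℝ} (hA : A.IsHermitian) {lam : ℝ}
    (h : (A - lam • (1 : Matrix (Fin d) (Fin d) ℝ)).PosSemidef) (i : Fin d) :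
    lam ≤ hA.eigenvalues i := by
  have hv := hA.eigenvalues_eq i
  set w : Fin d → ℝ := ⇑(hA.eigenvectorBasis i) with hw
  have hnorm : ∑ j, w j * w j = 1 := by
    have h1 : ‖hA.eigenvectorBasis i‖ = 1 := hA.eigenvectorBasis.orthonormal.1 i
    have h2 : (@inner ℝ _ _ (hA.eigenvectorBasis i) (hA.eigenvectorBasis i)) = 1 := by
      rw [real_inner_self_eq_norm_sq, h1]; norm_num
    rw [PiLp.inner_apply] at h2
    rw [hw]
    simpa [RCLike.inner_apply, pow_two] using h2
  have hsplit : dotProduct (star w) (A.mulVec w)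
      = dotProduct (star w) ((A - lam • (1 : Matrix (Fin d) (Fin d) ℝ)).mulVec w) + lam := by
    rw [Matrix.sub_mulVec, dotProduct_sub]
    have : dotProduct (star w) ((lam • (1 : Matrix (Fin d) (Fin d) ℝ)).mulVec w) = lam := by
      rw [Matrix.smul_mulVec, Matrix.one_mulVec, dotProduct_smul]
      simp only [smul_eq_mul, dotProduct, Pi.star_apply, star_trivial]
      rw [hnorm, mul_one]
    rw [this]; ring
  have := h.dotProduct_mulVec_nonneg w
  rw [hv, hsplit]
  simpa using this

lemma trace_eq_sum_eig {d : ℕ} {A : Matrix (Fin d) (Fin d) ℝ} (hA : A.IsHermitian) :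
    A.trace = ∑ i, hA.eigenvalues i := by
  conv_lhs => rw [hA.spectral_theorem, Unitary.conjStarAlgAut_apply]
  rw [Matrix.trace_mul_cycle]
  have hu : (star (hA.eigenvectorUnitary : Matrix (Fin d) (Fin d) ℝ)) *
      (hA.eigenvectorUnitary : Matrix (Fin d) (Fin d) ℝ) = 1 :=
    hA.eigenvectorUnitary.prop.1
  rw [hu, Matrix.one_mul, Matrix.trace_diagonal]
  simp [RCLike.ofReal_real_eq_id]

lemma det_le_trace_pow {d : ℕ} (hd : 0 < d) {A : Matrix (Fin d) (Fin d) ℝ}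
    (hA : A.PosSemidef) : A.det ≤ (A.trace / d) ^ d := by
  have h0 : ∀ i, 0 ≤ hA.1.eigenvalues i := hA.eigenvalues_nonneg
  have hdet : A.det = ∏ i, hA.1.eigenvalues i := by
    rw [hA.1.det_eq_prod_eigenvalues]; simp [RCLike.ofReal_real_eq_id]
  have htr : A.trace = ∑ i, hA.1.eigenvalues i := trace_eq_sum_eig hA.1
  have hgm := Real.geom_mean_le_arith_mean_weighted Finset.univ (fun _ => (d : ℝ)⁻¹)
    hA.1.eigenvalues (fun i _ => by positivity) (by
      simp [Finset.card_univ]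
      field_simp) (fun i _ => h0 i)
  have hprod : (∏ i, hA.1.eigenvalues i ^ ((d : ℝ)⁻¹)) = (∏ i, hA.1.eigenvalues i) ^ ((d:ℝ)⁻¹) :=
    Real.finset_prod_rpow Finset.univ _ (fun i _ => h0 i) _
  have hsum : (∑ i, ((d:ℝ))⁻¹ * hA.1.eigenvalues i) = A.trace / d := by
    rw [htr, ← Finset.mul_sum]; ring
  rw [hprod, hsum] at hgm
  have hPnn : 0 ≤ ∏ i, hA.1.eigenvalues i := Finset.prod_nonneg (fun i _ => h0 i)
  have := pow_le_pow_left₀ (by positivity) hgm d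
  rw [← Real.rpow_natCast ((∏ i, hA.1.eigenvalues i) ^ ((d:ℝ)⁻¹)) d, ← Real.rpow_mul hPnn] at this
  rw [inv_mul_cancel₀ (by exact_mod_cast hd.ne' : (d:ℝ) ≠ 0), Real.rpow_one] at this
  rw [hdet]; exact this

/-- with `V t = λ·I + ∑_{s=1}^t z_s z_sᵀ` and `‖z_t‖ ≤ R_z` for `t ∈ {1,…,T}`, if
there are indices `1 ≤ t_1 < … < t_N ≤ T` with `det(V_{t_{k+1}}) ≥ 2·det(V_{t_k})`, then
`N ≤ 1 + 2·d·log(1 + R_z²·T/(d·λ))`. -/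
theorem stmt_6 {d : ℕ} (T N : ℕ) (z : ℕ → Fin d → ℝ) (Rz lam : ℝ) (hRz : 0 < Rz)
    (hlam : 0 < lam)
    (hz : ∀ t ∈ Finset.Icc 1 T, euclNorm (z t) ≤ Rz)
    (V : ℕ → Matrix (Fin d) (Fin d) ℝ)
    (hV : ∀ t, V t = lam • (1 : Matrix (Fin d) (Fin d) ℝ) +
      ∑ s ∈ Finset.Icc 1 t, Matrix.vecMulVec (z s) (z s))
    (tk : ℕ → ℕ)
    (htk : ∀ k ∈ Finset.Icc 1 N, 1 ≤ tk k ∧ tk k ≤ T)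
    (hmono : ∀ k, 1 ≤ k → k + 1 ≤ N → tk k < tk (k + 1))
    (hdet : ∀ k, 1 ≤ k → k + 1 ≤ N → 2 * (V (tk k)).det ≤ (V (tk (k + 1))).det) :
    (N : ℝ) ≤ 1 + 2 * (d : ℝ) * Real.log (1 + Rz ^ 2 * (T : ℝ) / ((d : ℝ) * lam)) := by
  set x : ℝ := Rz ^ 2 * (T : ℝ) / ((d : ℝ) * lam) with hxdef
  have hx0 : 0 ≤ x := by positivity
  have hlog0 : 0 ≤ Real.log (1 + x) := Real.log_nonneg (by linarith)
  rcases le_or_gt N 1 with hN1 | hN1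
  · have hNr : (N : ℝ) ≤ 1 := by exact_mod_cast hN1
    nlinarith [mul_nonneg (by positivity : (0:ℝ) ≤ 2 * (d:ℝ)) hlog0]
  -- now 2 ≤ N
  have hN2 : 2 ≤ N := hN1
  rcases Nat.eq_zero_or_pos d with hd0 | hd
  · exfalso
    have h := hdet 1 le_rfl hN2
    subst hd0
    simp [Matrix.det_isEmpty] at h
  have hdR : (0 : ℝ) < d := by exact_mod_cast hd
  -- positive semidefiniteness facts
  have hSpsd : ∀ t : ℕ, (∑ s ∈ Finset.Icc 1 t, Matrix.vecMulVec (z s) (z s)).PosSemidef := by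
    intro t
    exact Finset.sum_induction _ Matrix.PosSemidef (fun a b ha hb => ha.add hb)
      Matrix.PosSemidef.zero (fun s _ => psd_vvt (z s))
  have hsmul : lam • (1 : Matrix (Fin d) (Fin d) ℝ) = Matrix.diagonal (fun _ => lam) := by
    ext i j
    by_cases h : i = j <;> simp [Matrix.one_apply, h]
  have hVpsd : ∀ t, (V t).PosSemidef := by
    intro t
    rw [hV t, hsmul]
    exact (Matrix.PosSemidef.diagonal (fun i => hlam.le)).add (hSpsd t)
  have hVsub : ∀ t, (V t - lam • (1 : Matrix (Fin d) (Fin d) ℝ)).PosSemidef := by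
    intro t
    have : V t - lam • (1 : Matrix (Fin d) (Fin d) ℝ)
        = ∑ s ∈ Finset.Icc 1 t, Matrix.vecMulVec (z s) (z s) := by
      rw [hV t, add_sub_cancel_left]
    rw [this]; exact hSpsd t
  -- lower bound on det (V (tk 1))
  have hdet1 : lam ^ d ≤ (V (tk 1)).det := by
    have hherm := (hVpsd (tk 1)).1
    have hprod : (V (tk 1)).det = ∏ i, hherm.eigenvalues i := by
      rw [hherm.det_eq_prod_eigenvalues]; simp [RCLike.ofReal_real_eq_id]
    have hle : ∀ i ∈ Finset.univ, lam ≤ hherm.eigenvalues i :=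
      fun i _ => eig_ge hherm (hVsub (tk 1)) i
    have := Finset.prod_le_prod (fun (i : Fin d) _ => hlam.le) hle
    rw [hprod]
    simpa [Finset.prod_const, Finset.card_univ] using this
  -- chain of determinant doublings
  have chain : ∀ k, 1 ≤ k → k ≤ N → (2:ℝ) ^ (k - 1) * (V (tk 1)).det ≤ (V (tk k)).det := by
    intro k hk
    induction k, hk using Nat.le_induction with
    | base => intro _; simp
    | succ k hk ih =>
      intro hkN
      have h1 := hdet k hk hkN
      have h2 := ih (le_trans (Nat.le_succ k) hkN)
      have hkk : k + 1 - 1 = k := by omega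
      have hks : (2:ℝ) ^ k = 2 * (2:ℝ) ^ (k - 1) := by
        conv_lhs => rw [show k = (k - 1) + 1 by omega]
        ring
      rw [hkk, hks, mul_assoc]
      calc 2 * ((2:ℝ) ^ (k-1) * (V (tk 1)).det) ≤ 2 * (V (tk k)).det := by linarith
        _ ≤ (V (tk (k+1))).det := h1
  have hchainN := chain N (by omega) le_rfl
  -- trace upper bound for V (tk N)
  have htkN := htk N (Finset.mem_Icc.mpr ⟨by omega, le_rfl⟩)
  have htrace : (V (tk N)).trace ≤ lam * d + T * Rz ^ 2 := by
    rw [hV, Matrix.trace_add, Matrix.trace_smul, Matrix.trace_one, Matrix.trace_sum]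
    have hterm : ∀ s ∈ Finset.Icc 1 (tk N), (Matrix.vecMulVec (z s) (z s)).trace ≤ Rz ^ 2 := by
      intro s hs
      rcases Finset.mem_Icc.mp hs with ⟨hs1, hs2⟩
      have hzs := hz s (Finset.mem_Icc.mpr ⟨hs1, le_trans hs2 htkN.2⟩)
      have htr : (Matrix.vecMulVec (z s) (z s)).trace = ∑ i, z s i ^ 2 := by
        rw [Matrix.vecMulVec_eq Unit, Matrix.trace_replicateCol_mul_replicateRow]
        simp [dotProduct, pow_two]
      rw [htr]
      have hnn : 0 ≤ ∑ i, z s i ^ 2 := by positivity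
      calc ∑ i, z s i ^ 2 = (euclNorm (z s)) ^ 2 := by rw [euclNorm, Real.sq_sqrt hnn]
        _ ≤ Rz ^ 2 := pow_le_pow_left₀ (Real.sqrt_nonneg _) hzs 2
    have hsum := Finset.sum_le_card_nsmul _ _ _ hterm
    rw [Nat.card_Icc] at hsum
    have hcard : ((tk N + 1 - 1) : ℕ) = tk N := by omega
    rw [hcard, nsmul_eq_mul] at hsum
    have hTle : (tk N : ℝ) * Rz ^ 2 ≤ (T : ℝ) * Rz ^ 2 := by
      have : (tk N : ℝ) ≤ T := by exact_mod_cast htkN.2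
      nlinarith
    have : lam • (Fintype.card (Fin d) : ℝ) = lam * d := by
      simp [Fintype.card_fin]
    rw [this]
    linarith
  have htrace0 : 0 ≤ (V (tk N)).trace := by
    rw [trace_eq_sum_eig (hVpsd (tk N)).1]
    exact Finset.sum_nonneg fun i _ => (hVpsd (tk N)).eigenvalues_nonneg i
  -- determinant upper bound
  have hdetN : (V (tk N)).det ≤ ((lam * d + T * Rz ^ 2) / d) ^ d := by
    calc (V (tk N)).det ≤ ((V (tk N)).trace / d) ^ d := det_le_trace_pow hd (hVpsd (tk N))
      _ ≤ ((lam * d + T * Rz ^ 2) / d) ^ d := by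
          apply pow_le_pow_left₀ (by positivity)
          gcongr
  -- rewrite the bound as lam^d * (1+x)^d
  have hform : (lam * d + T * Rz ^ 2) / d = lam * (1 + x) := by
    rw [hxdef]
    field_simp
  have hkey : (2:ℝ) ^ (N - 1) * lam ^ d ≤ (lam * (1 + x)) ^ d := by
    calc (2:ℝ) ^ (N - 1) * lam ^ d ≤ (2:ℝ) ^ (N - 1) * (V (tk 1)).det := by
          have : (0:ℝ) ≤ (2:ℝ) ^ (N - 1) := by positivity
          nlinarith
      _ ≤ (V (tk N)).det := hchainN
      _ ≤ ((lam * d + T * Rz ^ 2) / d) ^ d := hdetN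
      _ = (lam * (1 + x)) ^ d := by rw [hform]
  have hpow : (2:ℝ) ^ (N - 1) ≤ (1 + x) ^ d := by
    have hlp : (0:ℝ) < lam ^ d := by positivity
    rw [mul_pow] at hkey
    exact le_of_mul_le_mul_right (hkey.trans_eq (mul_comm _ _)) hlp
  -- take logs
  have hlogle : Real.log ((2:ℝ) ^ (N - 1)) ≤ Real.log ((1 + x) ^ d) := by
    apply Real.log_le_log (by positivity) hpow
  rw [Real.log_pow, Real.log_pow] at hlogle
  have hcast : ((N - 1 : ℕ) : ℝ) = (N : ℝ) - 1 := by
    have : 1 ≤ N := by omega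
    rw [Nat.cast_sub this, Nat.cast_one]
  rw [hcast] at hlogle
  have hNr : (2 : ℝ) ≤ N := by exact_mod_cast hN2
  nlinarith [Real.log_two_gt_d9, hlogle, hNr,
    mul_nonneg (by linarith : (0:ℝ) ≤ (N:ℝ) - 1) (by nlinarith [Real.log_two_gt_d9] : (0:ℝ) ≤ 2 * Real.log 2 - 1)]
end

section
/- Let Θ = [A B] with A ∈ ℝ^{n×n}, B ∈ ℝ^{n×m}, let W be a symmetric n×n matrix with W ⪰ σ·I for σ > 0, and let 0 ≤ η̄ < σ, ν ≥ σ − η̄. Suppose that for every t in an interval of integers, Σ_t is a symmetric positive semidefinite (n+m)×(n+m) matrix, written in blocks Σ_t = [[Σ_{t,xx}, Σ_{t,xu}],[Σ_{t,ux}, Σ_{t,uu}]], satisfying: tr(Σ_t) ≤ ν; Σ_{t,xx} ⪰ Θ Σ_t Θᵀ + W − η̄·I; and ‖Σ_{t+1} − Σ_t‖ ≤ (σ−η̄)²/(2ν). Then each Σ_{t,xx} is invertible, and with K_t := Σ_{t,ux} Σ_{t,xx}⁻¹ the sequence of closed-loop matrices (A + B K_t) is (κ,γ)-sequentially strongly stable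 with κ = ν/(σ−η̄) and γ = (σ−η̄)/(2ν), and moreover ‖K_t‖ ≤ κ for all t. -/
open scoped Matrix

/-- The spectral (ℓ²-operator) norm of a real matrix. -/
noncomputable def specNorm {m n : Type*} [Fintype m] [Fintype n] [DecidableEq n]
    (A : Matrix m n ℝ) : ℝ :=
  ‖LinearMap.toContinuousLinearMap (Matrix.toEuclideanLin A)‖

/-- A family of square matrices, indexed over a set `s` of times, is
`(κ,γ)`-sequentially strongly stable (`κ ≥ 1`, `γ ∈ (0,1)`) if there exist invertible `H t` and
`L t` with `M t = H t * L t * (H t)⁻¹`, `‖L t‖ ≤ 1 − γ`, `‖H t‖·‖(H t)⁻¹‖ ≤ κ`, and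
`‖(H (t+1))⁻¹ * H t‖ ≤ 1 + γ/2`. -/
def SeqStronglyStableOn {n : ℕ} (M : ℕ → Matrix (Fin n) (Fin n) ℝ) (s : Set ℕ)
    (κ γ : ℝ) : Prop :=
  1 ≤ κ ∧ 0 < γ ∧ γ < 1 ∧
  ∃ H L : ℕ → Matrix (Fin n) (Fin n) ℝ,
    (∀ t ∈ s, IsUnit (H t).det ∧ M t = H t * L t * (H t)⁻¹ ∧
      specNorm (L t) ≤ 1 - γ ∧ specNorm (H t) * specNorm ((H t)⁻¹) ≤ κ) ∧
    ∀ t, t ∈ s → t + 1 ∈ s → specNorm ((H (t + 1))⁻¹ * H t) ≤ 1 + γ / 2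

open scoped Matrix.Norms.L2Operator
open scoped MatrixOrder
set_option linter.unusedSectionVars false
set_option linter.unusedVariables false
set_option maxHeartbeats 1000000

namespace StmtAux

lemma specNorm_eq {m n : Type*} [Fintype m] [Fintype n] [DecidableEq n]
    (A : Matrix m n ℝ) : specNorm A = ‖A‖ := rfl

variable {k l : Type*} [Fintype k] [DecidableEq k] [Fintype l] [DecidableEq l]

/-- embed a plain vector into Euclidean space -/
noncomputable def toE (x : k → ℝ) : EuclideanSpace ℝ k := (WithLp.equiv 2 _).symm x

lemma inner_toE (x y : k → ℝ) : (inner ℝ (toE x) (toE y) : ℝ) = x ⬝ᵥ y := by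
  change y ⬝ᵥ star x = x ⬝ᵥ y; rw [star_trivial, dotProduct_comm]

lemma norm_toE_sq (x : k → ℝ) : ‖toE x‖ * ‖toE x‖ = x ⬝ᵥ x := by
  rw [← real_inner_self_eq_norm_mul_norm, inner_toE]

lemma clm_toE (M : Matrix k k ℝ) (x : k → ℝ) :
    Matrix.toEuclideanCLM (𝕜 := ℝ) M (toE x) = toE (M *ᵥ x) := by
  simp [toE, Matrix.toEuclideanCLM_toLp, Matrix.toLin'_apply]

lemma norm_mulVec_le (M : Matrix k k ℝ) (x : k → ℝ) :
    ‖toE (M *ᵥ x)‖ ≤ ‖M‖ * ‖toE x‖ := by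
  rw [← clm_toE, Matrix.cstar_norm_def]
  exact (Matrix.toEuclideanCLM (𝕜 := ℝ) M).le_opNorm _

lemma dotProduct_self_nonneg' (x : k → ℝ) : 0 ≤ x ⬝ᵥ x :=
  Finset.sum_nonneg fun i _ => mul_self_nonneg _

lemma dot_mulVec_le_norm (M : Matrix k k ℝ) (x : k → ℝ) :
    x ⬝ᵥ (M *ᵥ x) ≤ ‖M‖ * (x ⬝ᵥ x) := by
  have h1 : x ⬝ᵥ (M *ᵥ x) = (inner ℝ (toE (M *ᵥ x)) (toE x) : ℝ) := by
    rw [inner_toE, dotProduct_comm]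
  rw [h1, ← norm_toE_sq]
  calc (inner ℝ (toE (M *ᵥ x)) (toE x) : ℝ) ≤ ‖toE (M *ᵥ x)‖ * ‖toE x‖ := real_inner_le_norm _ _
    _ ≤ (‖M‖ * ‖toE x‖) * ‖toE x‖ :=
        mul_le_mul_of_nonneg_right (norm_mulVec_le M x) (norm_nonneg _)
    _ = ‖M‖ * (‖toE x‖ * ‖toE x‖) := by ring

lemma transpose_eq_of_herm {M : Matrix k k ℝ} (hM : M.IsHermitian) : Mᵀ = M := by
  rw [← Matrix.conjTranspose_eq_transpose_of_trivial, hM.eq]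

/-- from a norm bound to a Loewner upper bound -/
lemma psd_smul_one_sub_of_norm_le {M : Matrix k k ℝ} (hM : M.IsHermitian) {c : ℝ}
    (h : ‖M‖ ≤ c) : (c • (1 : Matrix k k ℝ) - M).PosSemidef := by
  refine Matrix.PosSemidef.of_dotProduct_mulVec_nonneg ?_ ?_
  · rw [Matrix.IsHermitian, Matrix.conjTranspose_sub, Matrix.conjTranspose_smul,
      Matrix.conjTranspose_one, hM.eq, star_trivial]
  · intro x
    rw [star_trivial, Matrix.sub_mulVec, dotProduct_sub, Matrix.smul_mulVec,
      Matrix.one_mulVec, dotProduct_smul, smul_eq_mul, sub_nonneg]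
    calc x ⬝ᵥ (M *ᵥ x) ≤ ‖M‖ * (x ⬝ᵥ x) := dot_mulVec_le_norm M x
      _ ≤ c * (x ⬝ᵥ x) := mul_le_mul_of_nonneg_right h (dotProduct_self_nonneg' x)

lemma norm_le_of_psd_le {M : Matrix k k ℝ} (hM : M.PosSemidef) {c : ℝ} (hc : 0 ≤ c)
    (h : (c • (1 : Matrix k k ℝ) - M).PosSemidef) : ‖M‖ ≤ c := by
  set S := CFC.sqrt M with hS
  have hSps : S.PosSemidef := Matrix.nonneg_iff_posSemidef.mp (CFC.sqrt_nonneg M)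
  have hSS : S * S = M := CFC.sqrt_mul_sqrt_self M hM.nonneg
  have hMt : Mᵀ = M := transpose_eq_of_herm hM.1
  have key : (c • M - M * M).PosSemidef := by
    have h1 : (S * (c • (1 : Matrix k k ℝ) - M) * Sᴴ).PosSemidef :=
      h.mul_mul_conjTranspose_same S
    have h2 : S * (c • (1 : Matrix k k ℝ) - M) * Sᴴ = c • M - M * M := by
      rw [hSps.isHermitian.eq]
      rw [Matrix.mul_sub, Matrix.sub_mul, Matrix.mul_smul, mul_one, Matrix.smul_mul, hSS]
      congr 1
      rw [← hSS]
      noncomm_ring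
    rwa [h2] at h1
  have hb : ∀ x : k → ℝ, ‖toE (M *ᵥ x)‖ ≤ c * ‖toE x‖ := by
    intro x
    have h3 := key.dotProduct_mulVec_nonneg x
    rw [star_trivial, Matrix.sub_mulVec, dotProduct_sub, sub_nonneg,
      Matrix.smul_mulVec, dotProduct_smul, smul_eq_mul] at h3
    have h4 : x ⬝ᵥ ((M * M) *ᵥ x) = (M *ᵥ x) ⬝ᵥ (M *ᵥ x) := by
      rw [← Matrix.mulVec_mulVec, Matrix.dotProduct_mulVec x M, ← hMt,
        Matrix.vecMul_transpose, hMt]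
    rw [h4] at h3
    have h5 : x ⬝ᵥ (M *ᵥ x) ≤ ‖toE x‖ * ‖toE (M *ᵥ x)‖ := by
      rw [← inner_toE]
      exact real_inner_le_norm _ _
    have h6 : ‖toE (M *ᵥ x)‖ * ‖toE (M *ᵥ x)‖ = (M *ᵥ x) ⬝ᵥ (M *ᵥ x) := norm_toE_sq _
    nlinarith [norm_nonneg (toE (M *ᵥ x)), norm_nonneg (toE x),
      mul_nonneg hc (norm_nonneg (toE x))]
  rw [Matrix.cstar_norm_def]
  refine ContinuousLinearMap.opNorm_le_bound _ hc fun y => ?_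
  have hy : y = toE ((WithLp.equiv 2 _) y) := rfl
  rw [hy, clm_toE]
  exact hb _

/-- c*-identity, real form -/
lemma norm_sq_eq (M : Matrix k l ℝ) : ‖M * Mᵀ‖ = ‖M‖ * ‖M‖ := by
  rw [← Matrix.conjTranspose_eq_transpose_of_trivial]
  calc ‖M * Mᴴ‖ = ‖(Mᴴ)ᴴ * Mᴴ‖ := by rw [Matrix.conjTranspose_conjTranspose]
    _ = ‖Mᴴ‖ * ‖Mᴴ‖ := Matrix.l2_opNorm_conjTranspose_mul_self _
    _ = ‖M‖ * ‖M‖ := by rw [Matrix.l2_opNorm_conjTranspose]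

/-- Loewner bound by the trace for a psd matrix -/
lemma psd_trace_smul_one_sub {M : Matrix k k ℝ} (hM : M.PosSemidef) :
    (M.trace • (1 : Matrix k k ℝ) - M).PosSemidef := by
  obtain ⟨C, hC⟩ : ∃ C : Matrix k k ℝ, M = Cᴴ * C := by
    obtain ⟨C, hC⟩ := CStarAlgebra.nonneg_iff_eq_star_mul_self.mp hM.nonneg
    exact ⟨C, hC⟩
  refine Matrix.PosSemidef.of_dotProduct_mulVec_nonneg ?_ ?_
  · rw [Matrix.IsHermitian, Matrix.conjTranspose_sub, Matrix.conjTranspose_smul,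
      Matrix.conjTranspose_one, hM.1.eq, star_trivial]
  · intro x
    rw [star_trivial, Matrix.sub_mulVec, dotProduct_sub, sub_nonneg,
      Matrix.smul_mulVec, Matrix.one_mulVec, dotProduct_smul, smul_eq_mul]
    have h4 : x ⬝ᵥ (M *ᵥ x) = (C *ᵥ x) ⬝ᵥ (C *ᵥ x) := by
      rw [hC, Matrix.conjTranspose_eq_transpose_of_trivial, ← Matrix.mulVec_mulVec,
        Matrix.dotProduct_mulVec x, Matrix.vecMul_transpose]
    have htr : M.trace = ∑ i, (C i) ⬝ᵥ (C i) := by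
      rw [hC, Matrix.conjTranspose_eq_transpose_of_trivial, Matrix.trace]
      simp only [Matrix.diag, Matrix.mul_apply, Matrix.transpose_apply, dotProduct]
      exact Finset.sum_comm
    have hCS : ∀ i, (C i ⬝ᵥ x) * (C i ⬝ᵥ x) ≤ (C i ⬝ᵥ C i) * (x ⬝ᵥ x) := by
      intro i
      have := Finset.sum_mul_sq_le_sq_mul_sq Finset.univ (C i) x
      simpa only [dotProduct, pow_two] using this
    rw [h4, htr]
    calc (C *ᵥ x) ⬝ᵥ (C *ᵥ x) = ∑ i, (C i ⬝ᵥ x) * (C i ⬝ᵥ x) := by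
          simp [dotProduct, Matrix.mulVec]
      _ ≤ ∑ i, (C i ⬝ᵥ C i) * (x ⬝ᵥ x) := Finset.sum_le_sum fun i _ => hCS i
      _ = (∑ i, C i ⬝ᵥ C i) * (x ⬝ᵥ x) := by rw [Finset.sum_mul]

lemma psd_smul {M : Matrix k k ℝ} (hM : M.PosSemidef) {c : ℝ} (hc : 0 ≤ c) :
    (c • M).PosSemidef := by
  refine Matrix.PosSemidef.of_dotProduct_mulVec_nonneg ?_ ?_
  · rw [Matrix.IsHermitian, Matrix.conjTranspose_smul, hM.1.eq, star_trivial]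
  · intro x
    rw [Matrix.smul_mulVec, dotProduct_smul, smul_eq_mul]
    exact mul_nonneg hc (hM.dotProduct_mulVec_nonneg x)

end StmtAux

namespace StmtAux
variable {k l : Type*} [Fintype k] [DecidableEq k] [Fintype l] [DecidableEq l]

lemma psd_conj {P : Matrix k k ℝ} (hP : P.PosSemidef) (C : Matrix l k ℝ) :
    (C * P * Cᵀ).PosSemidef := by
  rw [← Matrix.conjTranspose_eq_transpose_of_trivial]
  exact hP.mul_mul_conjTranspose_same C

lemma posDef_of_psd_sub {X : Matrix k k ℝ} {s : ℝ} (hs : 0 < s)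
    (h : (X - s • (1 : Matrix k k ℝ)).PosSemidef) : X.PosDef := by
  have h1 : (s • (1 : Matrix k k ℝ)).PosDef := by
    rw [Matrix.smul_one_eq_diagonal]
    exact Matrix.posDef_diagonal_iff.mpr fun _ => hs
  have := Matrix.PosDef.posSemidef_add h h1
  rwa [sub_add_cancel] at this

lemma trace_nonneg_of_psd {X : Matrix k k ℝ} (hX : X.PosSemidef) : 0 ≤ X.trace := by
  rw [Matrix.trace]
  refine Finset.sum_nonneg fun i _ => ?_
  have := hX.dotProduct_mulVec_nonneg (Pi.single i 1)
  simpa [dotProduct, Matrix.mulVec, Pi.single_apply] using this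

open Classical in
/-- square root wrapper -/
noncomputable def Psqrt (M : Matrix k k ℝ) : Matrix k k ℝ :=
  if h : M.PosSemidef then CFC.sqrt M else 1

lemma Psqrt_psd {M : Matrix k k ℝ} (h : M.PosSemidef) : (Psqrt M).PosSemidef := by
  rw [Psqrt, dif_pos h]; exact Matrix.nonneg_iff_posSemidef.mp (CFC.sqrt_nonneg M)

lemma Psqrt_mul_self {M : Matrix k k ℝ} (h : M.PosSemidef) : Psqrt M * Psqrt M = M := by
  rw [Psqrt, dif_pos h]; exact CFC.sqrt_mul_sqrt_self M h.nonneg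

lemma Psqrt_transpose {M : Matrix k k ℝ} (h : M.PosSemidef) : (Psqrt M)ᵀ = Psqrt M :=
  transpose_eq_of_herm (Psqrt_psd h).1

lemma Psqrt_isUnit_det {M : Matrix k k ℝ} (h : M.PosSemidef) (hd : IsUnit M.det) :
    IsUnit (Psqrt M).det := by
  have : (Psqrt M).det * (Psqrt M).det = M.det := by
    rw [← Matrix.det_mul, Psqrt_mul_self h]
  exact isUnit_of_mul_isUnit_left (this ▸ hd)

lemma Psqrt_inv_mul_inv {M : Matrix k k ℝ} (h : M.PosSemidef) :
    (Psqrt M)⁻¹ * (Psqrt M)⁻¹ = M⁻¹ := by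
  rw [← Matrix.mul_inv_rev, Psqrt_mul_self h]

lemma Psqrt_inv_transpose {M : Matrix k k ℝ} (h : M.PosSemidef) :
    ((Psqrt M)⁻¹)ᵀ = (Psqrt M)⁻¹ := by
  rw [Matrix.transpose_nonsing_inv, Psqrt_transpose h]

lemma Psqrt_inv_mul_mul {M : Matrix k k ℝ} (h : M.PosSemidef) (hd : IsUnit M.det) :
    (Psqrt M)⁻¹ * M * (Psqrt M)⁻¹ = 1 := by
  have hu := Psqrt_isUnit_det h hd
  calc (Psqrt M)⁻¹ * M * (Psqrt M)⁻¹
      = (Psqrt M)⁻¹ * (Psqrt M * Psqrt M) * (Psqrt M)⁻¹ := by rw [Psqrt_mul_self h]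
    _ = ((Psqrt M)⁻¹ * Psqrt M) * (Psqrt M * (Psqrt M)⁻¹) := by noncomm_ring
    _ = 1 := by rw [Matrix.nonsing_inv_mul _ hu, Matrix.mul_nonsing_inv _ hu, one_mul]

/-- norm of the square root squared -/
lemma Psqrt_norm_sq {M : Matrix k k ℝ} (h : M.PosSemidef) :
    ‖Psqrt M‖ * ‖Psqrt M‖ = ‖M‖ := by
  rw [← norm_sq_eq, Psqrt_transpose h, Psqrt_mul_self h]

lemma Psqrt_inv_norm_sq {M : Matrix k k ℝ} (h : M.PosSemidef) :
    ‖(Psqrt M)⁻¹‖ * ‖(Psqrt M)⁻¹‖ = ‖M⁻¹‖ := by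
  rw [← norm_sq_eq, Psqrt_inv_transpose h, Psqrt_inv_mul_inv h]

/-- the key block-restriction inequality for the quadratic form -/
lemma dot_toBlocks₁₁ (D : Matrix (k ⊕ l) (k ⊕ l) ℝ) (x : k → ℝ) :
    x ⬝ᵥ (D.toBlocks₁₁ *ᵥ x) = (Sum.elim x 0) ⬝ᵥ (D *ᵥ (Sum.elim x 0)) := by
  simp [dotProduct, Matrix.mulVec, Fintype.sum_sum_type, Matrix.toBlocks₁₁]

lemma dot_elim_self (x : k → ℝ) :
    (Sum.elim x (0 : l → ℝ)) ⬝ᵥ (Sum.elim x 0) = x ⬝ᵥ x := by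
  simp [dotProduct, Fintype.sum_sum_type]

end StmtAux

namespace StmtAux
open Matrix

lemma step {n m : ℕ} (A : Matrix (Fin n) (Fin n) ℝ) (B : Matrix (Fin n) (Fin m) ℝ)
    (W : Matrix (Fin n) (Fin n) ℝ) (σ : ℝ) (hσ : 0 < σ)
    (hW : (W - σ • (1 : Matrix (Fin n) (Fin n) ℝ)).PosSemidef)
    (ηbar ν : ℝ) (hηbarσ : ηbar < σ) (hν : σ - ηbar ≤ ν)
    (S : Matrix (Fin n ⊕ Fin m) (Fin n ⊕ Fin m) ℝ)
    (hpsd : S.PosSemidef) (htr : S.trace ≤ ν)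
    (hstat : (S.toBlocks₁₁ - (Matrix.fromCols A B * S * (Matrix.fromCols A B)ᵀ + W -
          ηbar • (1 : Matrix (Fin n) (Fin n) ℝ))).PosSemidef) :
    S.toBlocks₁₁.PosDef ∧
    (S.toBlocks₁₁ - (σ - ηbar) • (1 : Matrix (Fin n) (Fin n) ℝ)).PosSemidef ∧
    (ν • (1 : Matrix (Fin n) (Fin n) ℝ) - S.toBlocks₁₁).PosSemidef ∧
    ((1 - (σ - ηbar)/ν) • S.toBlocks₁₁ -
      (A + B * (S.toBlocks₂₁ * S.toBlocks₁₁⁻¹)) * S.toBlocks₁₁ *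
        (A + B * (S.toBlocks₂₁ * S.toBlocks₁₁⁻¹))ᵀ).PosSemidef ∧
    (ν • (1 : Matrix (Fin m) (Fin m) ℝ) -
      S.toBlocks₂₁ * S.toBlocks₁₁⁻¹ * S.toBlocks₂₁ᵀ).PosSemidef := by
  have hs : 0 < σ - ηbar := sub_pos.mpr hηbarσ
  have hν0 : 0 < ν := lt_of_lt_of_le hs hν
  set s := σ - ηbar with hs_def
  set Θ := Matrix.fromCols A B with hΘ_def
  set X := S.toBlocks₁₁ with hX_def
  set S12 := S.toBlocks₁₂ with h12_def
  set S21 := S.toBlocks₂₁ with h21_def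
  set S22 := S.toBlocks₂₂ with h22_def
  have hXpsd : X.PosSemidef := hpsd.submatrix Sum.inl
  have h22psd : S22.PosSemidef := hpsd.submatrix Sum.inr
  have hΘpsd : (Θ * S * Θᵀ).PosSemidef := psd_conj hpsd Θ
  -- (2)
  have h2 : (X - s • (1 : Matrix (Fin n) (Fin n) ℝ)).PosSemidef := by
    have e : X - s • (1 : Matrix (Fin n) (Fin n) ℝ) =
        (X - (Θ * S * Θᵀ + W - ηbar • (1 : Matrix (Fin n) (Fin n) ℝ))) + (Θ * S * Θᵀ) +
        (W - σ • (1 : Matrix (Fin n) (Fin n) ℝ)) := by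
      rw [hs_def, sub_smul]; abel
    rw [e]
    exact (hstat.add hΘpsd).add hW
  -- (1)
  have h1 : X.PosDef := posDef_of_psd_sub hs h2
  have hXunit : IsUnit X.det := h1.det_pos.ne'.isUnit
  -- traces
  have htrX : X.trace ≤ ν := by
    have e : S.trace = X.trace + S22.trace := by
      simp [Matrix.trace, Fintype.sum_sum_type, hX_def, h22_def,
        Matrix.toBlocks₁₁, Matrix.toBlocks₂₂, Matrix.diag]
    have := trace_nonneg_of_psd h22psd
    linarith
  have htr22 : S22.trace ≤ ν := by
    have e : S.trace = X.trace + S22.trace := by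
      simp [Matrix.trace, Fintype.sum_sum_type, hX_def, h22_def,
        Matrix.toBlocks₁₁, Matrix.toBlocks₂₂, Matrix.diag]
    have := trace_nonneg_of_psd hXpsd
    linarith
  -- (3)
  have h3 : (ν • (1 : Matrix (Fin n) (Fin n) ℝ) - X).PosSemidef := by
    have e : ν • (1 : Matrix (Fin n) (Fin n) ℝ) - X =
        (X.trace • (1 : Matrix (Fin n) (Fin n) ℝ) - X) +
        (ν - X.trace) • (1 : Matrix (Fin n) (Fin n) ℝ) := by
      rw [sub_smul]; abel
    rw [e]
    exact (psd_trace_smul_one_sub hXpsd).add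
      (psd_smul Matrix.PosSemidef.one (by linarith))
  -- symmetry of blocks
  have hsym : S12 = S21ᵀ := by
    ext i j
    have := congrFun (congrFun hpsd.1 (Sum.inl i)) (Sum.inr j)
    simpa [Matrix.conjTranspose_apply, h12_def, h21_def, Matrix.toBlocks₁₂,
      Matrix.toBlocks₂₁, Matrix.transpose_apply] using this.symm
  have hXt : Xᵀ = X := transpose_eq_of_herm hXpsd.1
  -- Schur complement
  haveI : Invertible X := X.invertibleOfIsUnitDet hXunit
  have hSchur : (S22 - S21 * X⁻¹ * S12).PosSemidef := by
    have hfb : (Matrix.fromBlocks X S12 S12ᴴ S22).PosSemidef := by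
      have : S12ᴴ = S21 := by
        rw [Matrix.conjTranspose_eq_transpose_of_trivial, hsym, Matrix.transpose_transpose]
      rw [this, hX_def, h12_def, h21_def, h22_def, Matrix.fromBlocks_toBlocks]
      exact hpsd
    have := (Matrix.PosDef.fromBlocks₁₁ S12 S22 h1).mp hfb
    have e : S12ᴴ = S21 := by
      rw [Matrix.conjTranspose_eq_transpose_of_trivial, hsym, Matrix.transpose_transpose]
    rwa [e] at this
  -- the closed-loop difference identity
  set K := S21 * X⁻¹ with hK_def
  set M := A + B * K with hM_def
  have hKt : Kᵀ = X⁻¹ * S12 := by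
    rw [hK_def, Matrix.transpose_mul, Matrix.transpose_nonsing_inv, hXt, hsym]
  have hdiff : Θ * S * Θᵀ - M * X * Mᵀ = B * (S22 - S21 * X⁻¹ * S12) * Bᵀ := by
    have hΘe : Θ * S * Θᵀ =
        (A * X + B * S21) * Aᵀ + (A * S12 + B * S22) * Bᵀ := by
      conv_lhs => rw [← Matrix.fromBlocks_toBlocks S]
      rw [hΘ_def, Matrix.transpose_fromCols, Matrix.fromCols_mul_fromBlocks,
        Matrix.fromCols_mul_fromRows]
    have hMe : M * X * Mᵀ = A * X * Aᵀ + A * S12 * Bᵀ + B * S21 * Aᵀ +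
        B * (S21 * X⁻¹ * S12) * Bᵀ := by
      rw [hM_def, Matrix.transpose_add, Matrix.transpose_mul, hKt, hK_def]
      simp only [Matrix.mul_add, Matrix.add_mul, Matrix.mul_assoc,
        Matrix.nonsing_inv_mul_cancel_left _ _ hXunit,
        Matrix.mul_nonsing_inv_cancel_left _ _ hXunit]
      abel
    rw [hΘe, hMe]
    simp only [Matrix.mul_sub, Matrix.sub_mul, Matrix.add_mul, Matrix.mul_add]
    abel
  -- (4)
  have h4 : ((1 - s/ν) • X - M * X * Mᵀ).PosSemidef := by
    have hsν : (s/ν) • (ν • (1 : Matrix (Fin n) (Fin n) ℝ)) =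
        s • (1 : Matrix (Fin n) (Fin n) ℝ) := by
      rw [smul_smul, div_mul_cancel₀ _ hν0.ne']
    have e : (1 - s/ν) • X - M * X * Mᵀ =
        (X - (Θ * S * Θᵀ + W - ηbar • (1 : Matrix (Fin n) (Fin n) ℝ))) +
        (W - σ • (1 : Matrix (Fin n) (Fin n) ℝ)) +
        (Θ * S * Θᵀ - M * X * Mᵀ) +
        (s/ν) • (ν • (1 : Matrix (Fin n) (Fin n) ℝ) - X) := by
      rw [smul_sub, hsν, sub_smul, one_smul, hs_def, sub_smul]
      abel
    rw [e, hdiff]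
    exact ((hstat.add hW).add (psd_conj hSchur B)).add (psd_smul h3 (by positivity))
  -- (5)
  have h5 : (ν • (1 : Matrix (Fin m) (Fin m) ℝ) - S21 * X⁻¹ * S21ᵀ).PosSemidef := by
    have e : ν • (1 : Matrix (Fin m) (Fin m) ℝ) - S21 * X⁻¹ * S21ᵀ =
        (S22 - S21 * X⁻¹ * S12) + (S22.trace • (1 : Matrix (Fin m) (Fin m) ℝ) - S22) +
        (ν - S22.trace) • (1 : Matrix (Fin m) (Fin m) ℝ) := by
      rw [hsym, sub_smul]; abel
    rw [e]
    exact (hSchur.add (psd_trace_smul_one_sub h22psd)).add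
      (psd_smul Matrix.PosSemidef.one (by linarith))
  exact ⟨h1, h2, h3, h4, h5⟩

end StmtAux

namespace StmtAux
variable {k : Type*} [Fintype k] [DecidableEq k]

lemma inv_loewner {X : Matrix k k ℝ} (hpd : X.PosDef) {s : ℝ} (hs : 0 < s)
    (h : (X - s • (1 : Matrix k k ℝ)).PosSemidef) :
    (s⁻¹ • (1 : Matrix k k ℝ) - X⁻¹).PosSemidef := by
  have hXpsd := hpd.posSemidef
  have hXunit : IsUnit X.det := hpd.det_pos.ne'.isUnit
  have e : s⁻¹ • ((Psqrt X)⁻¹ * (X - s • (1 : Matrix k k ℝ)) * ((Psqrt X)⁻¹)ᵀ) =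
      s⁻¹ • (1 : Matrix k k ℝ) - X⁻¹ := by
    rw [Psqrt_inv_transpose hXpsd, Matrix.mul_sub, Matrix.sub_mul,
      Psqrt_inv_mul_mul hXpsd hXunit, Matrix.mul_smul, mul_one, Matrix.smul_mul,
      Psqrt_inv_mul_inv hXpsd, smul_sub, smul_smul, inv_mul_cancel₀ hs.ne', one_smul]
  rw [← e]
  exact psd_smul (psd_conj h _) (inv_nonneg.mpr hs.le)

lemma inv_norm_le {X : Matrix k k ℝ} (hpd : X.PosDef) {s : ℝ} (hs : 0 < s)
    (h : (X - s • (1 : Matrix k k ℝ)).PosSemidef) : ‖X⁻¹‖ ≤ s⁻¹ :=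
  norm_le_of_psd_le hpd.inv.posSemidef (inv_nonneg.mpr hs.le) (inv_loewner hpd hs h)

end StmtAux

open StmtAux

/-- if, on an interval of times, the psd matrices `Σ_t` (with blocks indexed by
`Fin n ⊕ Fin m`) have trace at most `ν`, satisfy the relaxed stationarity condition
`Σ_{t,xx} ⪰ Θ Σ_t Θᵀ + W − η̄·I` (where `Θ = [A B]`, `W ⪰ σ·I`, `0 ≤ η̄ < σ ≤ η̄ + ν`) and vary
slowly, `‖Σ_{t+1} − Σ_t‖ ≤ (σ−η̄)²/(2ν)`, then each `Σ_{t,xx}` is invertible and, with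
`K_t = Σ_{t,ux} Σ_{t,xx}⁻¹`, the closed-loop matrices `A + B K_t` are `(κ,γ)`-sequentially
strongly stable with `κ = ν/(σ−η̄)`, `γ = (σ−η̄)/(2ν)`, and `‖K_t‖ ≤ κ`. -/
theorem stmt_7 {n m : ℕ} (A : Matrix (Fin n) (Fin n) ℝ) (B : Matrix (Fin n) (Fin m) ℝ)
    (W : Matrix (Fin n) (Fin n) ℝ) (hWsymm : W.IsSymm) (σ : ℝ) (hσ : 0 < σ)
    (hW : (W - σ • (1 : Matrix (Fin n) (Fin n) ℝ)).PosSemidef)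
    (ηbar ν : ℝ) (hηbar0 : 0 ≤ ηbar) (hηbarσ : ηbar < σ) (hν : σ - ηbar ≤ ν)
    (a b : ℕ) (Sig : ℕ → Matrix (Fin n ⊕ Fin m) (Fin n ⊕ Fin m) ℝ)
    (hpsd : ∀ t ∈ Set.Icc a b, (Sig t).PosSemidef)
    (htr : ∀ t ∈ Set.Icc a b, (Sig t).trace ≤ ν)
    (hstat : ∀ t ∈ Set.Icc a b,
      ((Sig t).toBlocks₁₁ -
        (Matrix.fromCols A B * Sig t * (Matrix.fromCols A B)ᵀ + W -
          ηbar • (1 : Matrix (Fin n) (Fin n) ℝ))).PosSemidef)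
    (hvar : ∀ t, t ∈ Set.Icc a b → t + 1 ∈ Set.Icc a b →
      specNorm (Sig (t + 1) - Sig t) ≤ (σ - ηbar) ^ 2 / (2 * ν)) :
    (∀ t ∈ Set.Icc a b, IsUnit ((Sig t).toBlocks₁₁).det) ∧
    SeqStronglyStableOn (fun t => A + B * ((Sig t).toBlocks₂₁ * ((Sig t).toBlocks₁₁)⁻¹))
      (Set.Icc a b) (ν / (σ - ηbar)) ((σ - ηbar) / (2 * ν)) ∧
    ∀ t ∈ Set.Icc a b, specNorm ((Sig t).toBlocks₂₁ * ((Sig t).toBlocks₁₁)⁻¹) ≤ ν / (σ - ηbar) := by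
  have hs : 0 < σ - ηbar := sub_pos.mpr hηbarσ
  have hν0 : 0 < ν := lt_of_lt_of_le hs hν
  have key := fun t (ht : t ∈ Set.Icc a b) =>
    StmtAux.step A B W σ hσ hW ηbar ν hηbarσ hν (Sig t) (hpsd t ht) (htr t ht) (hstat t ht)
  set s : ℝ := σ - ηbar with hs_def
  set γ : ℝ := s / (2 * ν) with hγ_def
  set κ : ℝ := ν / s with hκ_def
  have hγpos : 0 < γ := by positivity
  have hγhalf : γ ≤ 1/2 := by
    rw [hγ_def, div_le_iff₀ (by positivity)]; linarith
  have hγlt : γ < 1 := lt_of_le_of_lt hγhalf (by norm_num)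
  have hκ1 : 1 ≤ κ := (one_le_div hs).mpr hν
  set X : ℕ → Matrix (Fin n) (Fin n) ℝ := fun t => (Sig t).toBlocks₁₁ with hX_def
  set H : ℕ → Matrix (Fin n) (Fin n) ℝ := fun t => StmtAux.Psqrt (X t) with hH_def
  set K : ℕ → Matrix (Fin m) (Fin n) ℝ := fun t => (Sig t).toBlocks₂₁ * (X t)⁻¹ with hK_def
  set M : ℕ → Matrix (Fin n) (Fin n) ℝ := fun t => A + B * K t with hM_def
  -- per-time facts
  have hXpd : ∀ t ∈ Set.Icc a b, (X t).PosDef := fun t ht => (key t ht).1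
  have hXpsd : ∀ t ∈ Set.Icc a b, (X t).PosSemidef := fun t ht => (hXpd t ht).posSemidef
  have hXunit : ∀ t ∈ Set.Icc a b, IsUnit (X t).det :=
    fun t ht => ((hXpd t ht).det_pos.ne').isUnit
  have hHdet : ∀ t ∈ Set.Icc a b, IsUnit (H t).det :=
    fun t ht => Psqrt_isUnit_det (hXpsd t ht) (hXunit t ht)
  have hXnorm : ∀ t ∈ Set.Icc a b, ‖X t‖ ≤ ν :=
    fun t ht => norm_le_of_psd_le (hXpsd t ht) hν0.le (key t ht).2.2.1
  have hXinvnorm : ∀ t ∈ Set.Icc a b, ‖(X t)⁻¹‖ ≤ s⁻¹ :=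
    fun t ht => inv_norm_le (hXpd t ht) hs (key t ht).2.1
  have hHnorm : ∀ t ∈ Set.Icc a b, ‖H t‖ * ‖H t‖ ≤ ν := by
    intro t ht; rw [hH_def]; rw [Psqrt_norm_sq (hXpsd t ht)]; exact hXnorm t ht
  have hHinvnorm : ∀ t ∈ Set.Icc a b, ‖(H t)⁻¹‖ * ‖(H t)⁻¹‖ ≤ s⁻¹ := by
    intro t ht; rw [hH_def]; rw [Psqrt_inv_norm_sq (hXpsd t ht)]; exact hXinvnorm t ht
  refine ⟨hXunit, ⟨hκ1, hγpos, hγlt, H, fun t => (H t)⁻¹ * M t * H t, ?_, ?_⟩, ?_⟩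
  · -- main per-time conditions
    intro t ht
    have hXps := hXpsd t ht
    have hXu := hXunit t ht
    have hHd := hHdet t ht
    have hHt : (H t)ᵀ = H t := Psqrt_transpose hXps
    have hHit : ((H t)⁻¹)ᵀ = (H t)⁻¹ := Psqrt_inv_transpose hXps
    refine ⟨hHd, ?_, ?_, ?_⟩
    · -- factorization
      have e : H t * ((H t)⁻¹ * M t * H t) * (H t)⁻¹ =
          (H t * (H t)⁻¹) * M t * (H t * (H t)⁻¹) := by noncomm_ring
      rw [e, Matrix.mul_nonsing_inv _ hHd, one_mul, mul_one]
    · -- norm of L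
      set L := (H t)⁻¹ * M t * H t with hL_def
      have hLt : L * Lᵀ = (H t)⁻¹ * (M t * (H t * H t) * (M t)ᵀ) * (H t)⁻¹ := by
        rw [hL_def, Matrix.transpose_mul, Matrix.transpose_mul, hHt, hHit]
        noncomm_ring
      rw [Psqrt_mul_self hXps] at hLt
      have hconj : (1 - s/ν) • (1 : Matrix (Fin n) (Fin n) ℝ) - L * Lᵀ =
          (H t)⁻¹ * ((1 - s/ν) • X t - M t * X t * (M t)ᵀ) * ((H t)⁻¹)ᵀ := by
        rw [hHit, Matrix.mul_sub, Matrix.sub_mul, Matrix.mul_smul, Matrix.smul_mul,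
          Psqrt_inv_mul_mul hXps hXu, hLt, Matrix.mul_assoc, Matrix.mul_assoc]
      have hpsd1 : ((1 - s/ν) • (1 : Matrix (Fin n) (Fin n) ℝ) - L * Lᵀ).PosSemidef := by
        rw [hconj]; exact psd_conj (key t ht).2.2.2.1 _
      have hLLpsd : (L * Lᵀ).PosSemidef := by
        rw [← Matrix.conjTranspose_eq_transpose_of_trivial]
        exact Matrix.posSemidef_self_mul_conjTranspose L
      have hsν1 : 0 ≤ 1 - s/ν := by
        have : s/ν ≤ 1 := (div_le_one hν0).mpr hν
        linarith
      have hLLnorm : ‖L * Lᵀ‖ ≤ 1 - s/ν := norm_le_of_psd_le hLLpsd hsν1 hpsd1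
      have hLsq : ‖L‖ * ‖L‖ = ‖L * Lᵀ‖ := (norm_sq_eq L).symm
      rw [specNorm_eq]
      have h2γ : s/ν = 2*γ := by rw [hγ_def]; field_simp
      rw [h2γ] at hLLnorm
      nlinarith [norm_nonneg L, sq_nonneg γ, hγlt]
    · -- κ bound
      rw [specNorm_eq, specNorm_eq]
      have h1 := hHnorm t ht
      have h2 := hHinvnorm t ht
      have h3 : (‖H t‖ * ‖(H t)⁻¹‖) * (‖H t‖ * ‖(H t)⁻¹‖) ≤ κ := by
        calc (‖H t‖ * ‖(H t)⁻¹‖) * (‖H t‖ * ‖(H t)⁻¹‖)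
            = (‖H t‖ * ‖H t‖) * (‖(H t)⁻¹‖ * ‖(H t)⁻¹‖) := by ring
          _ ≤ ν * s⁻¹ := by
              apply mul_le_mul h1 h2 (mul_nonneg (norm_nonneg _) (norm_nonneg _)) hν0.le
          _ = κ := by rw [hκ_def, div_eq_mul_inv]
      nlinarith [mul_nonneg (norm_nonneg (H t)) (norm_nonneg ((H t)⁻¹)), hκ1]
  · -- slow variation
    intro t ht ht1
    have hXps0 := hXpsd t ht
    have hXps1 := hXpsd (t+1) ht1
    have hXu1 := hXunit (t+1) ht1
    have hHt0 : (H t)ᵀ = H t := Psqrt_transpose hXps0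
    have hHit1 : ((H (t+1))⁻¹)ᵀ = (H (t+1))⁻¹ := Psqrt_inv_transpose hXps1
    set ε : ℝ := s^2 / (2*ν) with hε_def
    have hvar' : ‖Sig (t+1) - Sig t‖ ≤ ε := hvar t ht ht1
    -- X t ⪯ X (t+1) + ε
    have hXvar : (X (t+1) + ε • (1 : Matrix (Fin n) (Fin n) ℝ) - X t).PosSemidef := by
      refine Matrix.PosSemidef.of_dotProduct_mulVec_nonneg ?_ ?_
      · rw [Matrix.IsHermitian, Matrix.conjTranspose_sub, Matrix.conjTranspose_add,
          Matrix.conjTranspose_smul, Matrix.conjTranspose_one, hXps1.1.eq, hXps0.1.eq,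
          star_trivial]
      · intro x
        rw [star_trivial, Matrix.sub_mulVec, Matrix.add_mulVec, dotProduct_sub,
          dotProduct_add, Matrix.smul_mulVec, Matrix.one_mulVec,
          dotProduct_smul, smul_eq_mul, sub_nonneg]
        have hd : x ⬝ᵥ (X t *ᵥ x) - x ⬝ᵥ (X (t+1) *ᵥ x) = x ⬝ᵥ ((X t - X (t+1)) *ᵥ x) := by
          rw [Matrix.sub_mulVec, dotProduct_sub]
        have hblock : X t - X (t+1) = (Sig t - Sig (t+1)).toBlocks₁₁ := rfl
        have hq : x ⬝ᵥ ((X t - X (t+1)) *ᵥ x) ≤ ε * (x ⬝ᵥ x) := by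
          rw [hblock, dot_toBlocks₁₁]
          calc (Sum.elim x 0) ⬝ᵥ ((Sig t - Sig (t+1)) *ᵥ (Sum.elim x 0))
              ≤ ‖Sig t - Sig (t+1)‖ * ((Sum.elim x 0) ⬝ᵥ (Sum.elim x 0)) :=
                dot_mulVec_le_norm _ _
            _ = ‖Sig (t+1) - Sig t‖ * (x ⬝ᵥ x) := by rw [norm_sub_rev, dot_elim_self]
            _ ≤ ε * (x ⬝ᵥ x) :=
                mul_le_mul_of_nonneg_right hvar' (dotProduct_self_nonneg' x)
        linarith [hq, hd ▸ hq]
    -- conjugate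
    set G := (H (t+1))⁻¹ * X t * (H (t+1))⁻¹ with hG_def
    have hεs : ε * s⁻¹ = γ := by
      rw [hε_def, hγ_def]; field_simp
    have hconj : (1 + γ) • (1 : Matrix (Fin n) (Fin n) ℝ) - G =
        (H (t+1))⁻¹ * (X (t+1) + ε • (1 : Matrix (Fin n) (Fin n) ℝ) - X t) * ((H (t+1))⁻¹)ᵀ
          + ε • (s⁻¹ • (1 : Matrix (Fin n) (Fin n) ℝ) - (X (t+1))⁻¹) := by
      rw [hHit1, Matrix.mul_sub, Matrix.sub_mul, Matrix.mul_add, Matrix.add_mul,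
        Psqrt_inv_mul_mul hXps1 hXu1, Matrix.mul_smul, mul_one, Matrix.smul_mul,
        Psqrt_inv_mul_inv hXps1, smul_sub, smul_smul, hεs, hG_def, add_smul, one_smul]
      abel
    have hGpsd : G.PosSemidef := by
      rw [hG_def]
      have h := psd_conj hXps0 ((H (t+1))⁻¹)
      rwa [hHit1] at h
    have hpsd2 : ((1 + γ) • (1 : Matrix (Fin n) (Fin n) ℝ) - G).PosSemidef := by
      rw [hconj]
      exact (psd_conj hXvar _).add (psd_smul (inv_loewner (hXpd (t+1) ht1) hs
        (key (t+1) ht1).2.1) (by positivity))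
    have hGnorm : ‖G‖ ≤ 1 + γ := norm_le_of_psd_le hGpsd (by linarith) hpsd2
    have hGsq : ‖(H (t+1))⁻¹ * H t‖ * ‖(H (t+1))⁻¹ * H t‖ = ‖G‖ := by
      rw [← norm_sq_eq, Matrix.transpose_mul, hHt0, hHit1, hG_def]
      have e : (H (t+1))⁻¹ * H t * (H t * (H (t+1))⁻¹) =
          (H (t+1))⁻¹ * (H t * H t) * (H (t+1))⁻¹ := by noncomm_ring
      rw [e, Psqrt_mul_self hXps0]
    rw [specNorm_eq]
    nlinarith [norm_nonneg ((H (t+1))⁻¹ * H t), hγpos]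
  · -- K bound
    intro t ht
    have hXps := hXpsd t ht
    have hHd := hHdet t ht
    have hHit : ((H t)⁻¹)ᵀ = (H t)⁻¹ := Psqrt_inv_transpose hXps
    set S21 := (Sig t).toBlocks₂₁ with h21_def
    have hKsplit : K t = (S21 * (H t)⁻¹) * (H t)⁻¹ := by
      rw [hK_def]
      show S21 * (X t)⁻¹ = S21 * (H t)⁻¹ * (H t)⁻¹
      rw [← Psqrt_inv_mul_inv hXps, Matrix.mul_assoc]
    have h1 : ‖K t‖ ≤ ‖S21 * (H t)⁻¹‖ * ‖(H t)⁻¹‖ := by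
      rw [hKsplit]; exact Matrix.l2_opNorm_mul _ _
    have h2 : ‖S21 * (H t)⁻¹‖ * ‖S21 * (H t)⁻¹‖ ≤ ν := by
      rw [← norm_sq_eq, Matrix.transpose_mul, hHit]
      have e : S21 * (H t)⁻¹ * ((H t)⁻¹ * S21ᵀ) = S21 * ((H t)⁻¹ * (H t)⁻¹) * S21ᵀ := by
        simp only [Matrix.mul_assoc]
      rw [e, Psqrt_inv_mul_inv hXps]
      exact norm_le_of_psd_le (psd_conj (hXpd t ht).inv.posSemidef S21) hν0.le
        (key t ht).2.2.2.2
    have h3 := hHinvnorm t ht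
    rw [specNorm_eq]
    show ‖K t‖ ≤ κ
    have h4 : ‖K t‖ * ‖K t‖ ≤ κ := by
      calc ‖K t‖ * ‖K t‖ ≤ (‖S21 * (H t)⁻¹‖ * ‖(H t)⁻¹‖) * (‖S21 * (H t)⁻¹‖ * ‖(H t)⁻¹‖) := by
            apply mul_le_mul h1 h1 (norm_nonneg _)
              (mul_nonneg (norm_nonneg _) (norm_nonneg _))
        _ = (‖S21 * (H t)⁻¹‖ * ‖S21 * (H t)⁻¹‖) * (‖(H t)⁻¹‖ * ‖(H t)⁻¹‖) := by ring
        _ ≤ ν * s⁻¹ := mul_le_mul h2 h3 (mul_nonneg (norm_nonneg _) (norm_nonneg _)) hν0.le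
        _ = κ := by rw [hκ_def, div_eq_mul_inv]
    nlinarith [norm_nonneg (K t), hκ1]
end

section
/- Let ᾱ_1,…,ᾱ_J be symmetric positive semidefinite d×d matrices, let V be a symmetric positive definite d×d matrix, let μ > 0, ε₁ > 0, ξ ∈ ℝ, and define the pessimistic set E^p = {Σ symmetric d×d, Σ ⪰ 0 : ⟨ᾱ_j, Σ⟩ + μ·⟨V⁻¹, Σ⟩ ≤ ξ for all j ∈ {1,…,J}}. Let Σ^o ⪰ 0 satisfy ⟨ᾱ_j, Σ^o⟩ ≤ ξ for all j, and let Σ^safe ⪰ 0 satisfy ⟨ᾱ_j, Σ^safe⟩ + μ·⟨V⁻¹, Σ^safe⟩ ≤ ξ − ε₁ for all j. Define φ* = max{φ ∈ [0,1] : φ·Σ^o + (1−φ)·Σ^safe ∈ E^p} and Σ̄ = φ*·Σ^o + (1−φ*)·Σ^safe. Then the maximum φ* exists and 1 − φ* ≤ μ·⟨V⁻¹, Σ̄⟩ / ε₁. -/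
open scoped Matrix

/-- The trace inner product `⟨X, Y⟩ = tr(Xᵀ Y)` of two real matrices. -/
noncomputable def matInner {d : ℕ} (X Y : Matrix (Fin d) (Fin d) ℝ) : ℝ :=
  (Xᵀ * Y).trace

lemma matInner_comb {d : ℕ} (X A B : Matrix (Fin d) (Fin d) ℝ) (φ : ℝ) :
    matInner X (φ • A + (1 - φ) • B) = φ * matInner X A + (1 - φ) * matInner X B := by
  simp [matInner, Matrix.mul_add, Matrix.mul_smul, Matrix.trace_add, Matrix.trace_smul,
    smul_eq_mul]

lemma isSymm_of_psd {d : ℕ} {A : Matrix (Fin d) (Fin d) ℝ} (h : A.PosSemidef) : A.IsSymm := by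
  have h1 := h.isHermitian
  unfold Matrix.IsHermitian at h1
  rw [Matrix.IsSymm]
  simpa [Matrix.conjTranspose, Matrix.map, Matrix.transpose] using h1

lemma psd_comb {d : ℕ} {A B : Matrix (Fin d) (Fin d) ℝ} (hA : A.PosSemidef)
    (hB : B.PosSemidef) {φ : ℝ} (h0 : 0 ≤ φ) (h1 : φ ≤ 1) :
    (φ • A + (1 - φ) • B).PosSemidef := by
  refine Matrix.PosSemidef.of_dotProduct_mulVec_nonneg ?_ ?_
  · show _ = _
    rw [Matrix.conjTranspose_add, Matrix.conjTranspose_smul, Matrix.conjTranspose_smul,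
      hA.1, hB.1]
    simp
  · intro x
    have ha := hA.dotProduct_mulVec_nonneg x
    have hb := hB.dotProduct_mulVec_nonneg x
    simp only [Matrix.add_mulVec, Matrix.smul_mulVec, dotProduct_add,
      dotProduct_smul, smul_eq_mul] at *
    have := add_nonneg (mul_nonneg h0 ha) (mul_nonneg (sub_nonneg.mpr h1) hb)
    simpa using this

lemma matInner_nonneg {d : ℕ} {A B : Matrix (Fin d) (Fin d) ℝ} (hA : A.PosSemidef)
    (hB : B.PosSemidef) : 0 ≤ matInner A B := by
  rw [matInner, (isSymm_of_psd hA).eq]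
  have hex : ∀ {M : Matrix (Fin d) (Fin d) ℝ}, M.PosSemidef → ∃ C : Matrix (Fin d) (Fin d) ℝ, M = Cᴴ * C := by
    intro M hM
    open scoped MatrixOrder in
    obtain ⟨X, hX, -, hXX⟩ := CFC.exists_sqrt_of_isSelfAdjoint_of_quasispectrumRestricts
      hM.isHermitian (QuasispectrumRestricts.nnreal_of_nonneg hM.nonneg)
    refine ⟨X, ?_⟩
    rw [← hXX, ← Matrix.star_eq_conjTranspose, hX.star_eq]
  obtain ⟨C, rfl⟩ := hex hA
  obtain ⟨D, rfl⟩ := hex hB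
  have key : (Cᴴ * C * (Dᴴ * D)).trace = ((C * Dᴴ)ᴴ * (C * Dᴴ)).trace := by
    rw [Matrix.conjTranspose_mul, Matrix.conjTranspose_conjTranspose]
    rw [show Cᴴ * C * (Dᴴ * D) = (Cᴴ * (C * Dᴴ)) * D by noncomm_ring,
      Matrix.trace_mul_comm, show D * (Cᴴ * (C * Dᴴ)) = D * Cᴴ * (C * Dᴴ) by noncomm_ring]
  rw [key]
  classical
  rw [Matrix.trace]
  refine Finset.sum_nonneg fun i _ => ?_
  rw [Matrix.diag_apply, Matrix.mul_apply]
  refine Finset.sum_nonneg fun k _ => ?_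
  simp [Matrix.conjTranspose_apply, mul_self_nonneg]

/-- with the pessimistic set
`E^p = {Σ ⪰ 0 : ⟨ᾱ_j, Σ⟩ + μ·⟨V⁻¹, Σ⟩ ≤ ξ ∀j}`, if `Σ^o ⪰ 0` satisfies `⟨ᾱ_j, Σ^o⟩ ≤ ξ` and
`Σ^safe ⪰ 0` satisfies `⟨ᾱ_j, Σ^safe⟩ + μ·⟨V⁻¹, Σ^safe⟩ ≤ ξ − ε₁`, then
`φ* = max{φ ∈ [0,1] : φ·Σ^o + (1−φ)·Σ^safe ∈ E^p}` exists and, with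
`Σ̄ = φ*·Σ^o + (1−φ*)·Σ^safe`, it holds that `1 − φ* ≤ μ·⟨V⁻¹, Σ̄⟩/ε₁`. -/
theorem stmt_11 {d J : ℕ} (alphaBar : Fin J → Matrix (Fin d) (Fin d) ℝ)
    (halphaSymm : ∀ j, (alphaBar j).IsSymm) (halphaPsd : ∀ j, (alphaBar j).PosSemidef)
    (V : Matrix (Fin d) (Fin d) ℝ) (hVsymm : V.IsSymm) (hVpd : V.PosDef)
    (μ ε₁ ξ : ℝ) (hμ : 0 < μ) (hε₁ : 0 < ε₁)
    (Ep : Set (Matrix (Fin d) (Fin d) ℝ))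
    (hEp : Ep = {S | S.IsSymm ∧ S.PosSemidef ∧
      ∀ j, matInner (alphaBar j) S + μ * matInner V⁻¹ S ≤ ξ})
    (So Ssafe : Matrix (Fin d) (Fin d) ℝ) (hSo : So.PosSemidef) (hSsafe : Ssafe.PosSemidef)
    (hSoC : ∀ j, matInner (alphaBar j) So ≤ ξ)
    (hSsafeC : ∀ j, matInner (alphaBar j) Ssafe + μ * matInner V⁻¹ Ssafe ≤ ξ - ε₁) :
    ∃ φstar : ℝ,
      IsGreatest {φ : ℝ | φ ∈ Set.Icc (0 : ℝ) 1 ∧ φ • So + (1 - φ) • Ssafe ∈ Ep} φstar ∧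
      1 - φstar ≤ μ * matInner V⁻¹ (φstar • So + (1 - φstar) • Ssafe) / ε₁ := by
  classical
  set vO := matInner V⁻¹ So with hvOdef
  set vS := matInner V⁻¹ Ssafe with hvSdef
  have hVinv : (V⁻¹).PosSemidef := hVpd.inv.posSemidef
  have hvO : 0 ≤ vO := matInner_nonneg hVinv hSo
  have hvS : 0 ≤ vS := matInner_nonneg hVinv hSsafe
  set T := {φ : ℝ | φ ∈ Set.Icc (0 : ℝ) 1 ∧ φ • So + (1 - φ) • Ssafe ∈ Ep} with hT
  -- characterization of membership
  have hmem : ∀ φ : ℝ, φ ∈ T ↔ φ ∈ Set.Icc (0:ℝ) 1 ∧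
      ∀ j, φ * (matInner (alphaBar j) So + μ * vO)
        + (1 - φ) * (matInner (alphaBar j) Ssafe + μ * vS) ≤ ξ := by
    intro φ
    constructor
    · rintro ⟨hicc, hmemEp⟩
      rw [hEp] at hmemEp
      refine ⟨hicc, fun j => ?_⟩
      have := hmemEp.2.2 j
      rw [matInner_comb, matInner_comb] at this
      linarith [this]
    · rintro ⟨hicc, hj⟩
      refine ⟨hicc, ?_⟩
      rw [hEp]
      refine ⟨isSymm_of_psd (psd_comb hSo hSsafe hicc.1 hicc.2),
        psd_comb hSo hSsafe hicc.1 hicc.2, fun j => ?_⟩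
      rw [matInner_comb, matInner_comb]
      have := hj j
      linarith [this]
  have hTclosed : IsClosed T := by
    have : T = Set.Icc (0:ℝ) 1 ∩ ⋂ j, {φ : ℝ | φ * (matInner (alphaBar j) So + μ * vO)
        + (1 - φ) * (matInner (alphaBar j) Ssafe + μ * vS) ≤ ξ} := by
      ext φ
      simp only [Set.mem_inter_iff, Set.mem_iInter, Set.mem_setOf_eq]
      exact (hmem φ)
    rw [this]
    exact isClosed_Icc.inter (isClosed_iInter fun j =>
      isClosed_le (by fun_prop) continuous_const)
  have hTbdd : BddAbove T := ⟨1, fun x hx => hx.1.2⟩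
  -- the special point φ₀
  set φ₀ : ℝ := ε₁ / (ε₁ + μ * vO) with hφ₀def
  have hden : 0 < ε₁ + μ * vO := by positivity
  have hφ₀pos : 0 < φ₀ := div_pos hε₁ hden
  have hφ₀le : φ₀ ≤ 1 := by
    rw [div_le_one hden]; nlinarith
  have hkey : φ₀ * (ε₁ + μ * vO) = ε₁ := div_mul_cancel₀ _ (ne_of_gt hden)
  have hφ₀mem : φ₀ ∈ T := by
    rw [hmem]
    refine ⟨⟨le_of_lt hφ₀pos, hφ₀le⟩, fun j => ?_⟩
    have h1 := hSoC j
    have h2 := hSsafeC j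
    have h1φ : 0 ≤ 1 - φ₀ := sub_nonneg.mpr hφ₀le
    nlinarith [mul_le_mul_of_nonneg_left h1 (le_of_lt hφ₀pos),
      mul_le_mul_of_nonneg_left h2 h1φ]
  have hTne : T.Nonempty := ⟨φ₀, hφ₀mem⟩
  set φstar := sSup T with hφstar
  have hφstarmem : φstar ∈ T := hTclosed.csSup_mem hTne hTbdd
  have hgreat : IsGreatest T φstar := ⟨hφstarmem, fun x hx => le_csSup hTbdd hx⟩
  refine ⟨φstar, hgreat, ?_⟩
  have hφ₀lestar : φ₀ ≤ φstar := le_csSup hTbdd hφ₀mem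
  have hstar1 : φstar ≤ 1 := hφstarmem.1.2
  have hstar0 : 0 ≤ φstar := hφstarmem.1.1
  rw [matInner_comb]
  rw [le_div_iff₀ hε₁]
  have hmul : φ₀ * (ε₁ + μ * vO) ≤ φstar * (ε₁ + μ * vO) :=
    mul_le_mul_of_nonneg_right hφ₀lestar (le_of_lt hden)
  rw [hkey] at hmul
  nlinarith [mul_nonneg (sub_nonneg.mpr hstar1) hvS, mul_nonneg hstar0 hvO]
end

section
/- Let ᾱ_1,…,ᾱ_J be symmetric positive semidefinite d×d matrices, let ξ ∈ ℝ, ε₁ > 0, c ≥ 0, ν > 0, and let Σ_a, Σ_safe be symmetric positive semidefinite d×d matrices with tr(Σ_a) ≤ ν and tr(Σ_safe) ≤ ν, such that ⟨ᾱ_j, Σ_safe⟩ ≤ ξ − ε₁ for all j and ⟨ᾱ_j, Σ_a⟩ ≤ ξ + c for all j. Then, with φ = ε₁/(ε₁ + c), the matrix Σ' = φ·Σ_a + (1−φ)·Σ_safe satisfies ⟨ᾱ_j, Σ'⟩ ≤ ξ for all j ∈ {1,…,J} and ‖Σ_a − Σ'‖ ≤ (2·ν/ε₁)·c. -/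
open scoped Matrix

open scoped Matrix.Norms.L2Operator

lemma specNorm_eq_norm {d : ℕ} (A : Matrix (Fin d) (Fin d) ℝ) : specNorm A = ‖A‖ := rfl

lemma specNorm_psd_le_trace {d : ℕ} {A : Matrix (Fin d) (Fin d) ℝ} (hA : A.PosSemidef) :
    specNorm A ≤ A.trace := by
  classical
  have hH := hA.1
  set μ := hH.eigenvalues with hμdef
  have hμ : ∀ i, 0 ≤ μ i := hA.eigenvalues_nonneg
  have htr : A.trace = ∑ i, μ i := by
    simpa using hH.trace_eq_sum_eigenvalues
  set b := hH.eigenvectorBasis with hbdef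
  have hb : ∀ i, Matrix.toEuclideanLin A (b i) = μ i • b i := by
    intro i
    have h := hH.mulVec_eigenvectorBasis i
    ext j
    simpa [Matrix.toEuclideanLin_apply] using congrFun h j
  have htrn : 0 ≤ A.trace := htr ▸ Finset.sum_nonneg fun i _ => hμ i
  rw [specNorm]
  refine ContinuousLinearMap.opNorm_le_bound _ htrn ?_
  intro x
  have hrep : ∀ i, |b.repr x i| ≤ ‖x‖ := by
    intro i
    rw [b.repr_apply_apply]
    calc |(inner ℝ (b i) x : ℝ)| ≤ ‖b i‖ * ‖x‖ := abs_real_inner_le_norm _ _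
      _ = ‖x‖ := by rw [b.orthonormal.1 i, one_mul]
  have hx : (LinearMap.toContinuousLinearMap (Matrix.toEuclideanLin A)) x
      = ∑ i, b.repr x i • (μ i • b i) := by
    conv_lhs => rw [← b.sum_repr x]
    simp [map_sum, hb]
  rw [hx]
  calc ‖∑ i, b.repr x i • (μ i • b i)‖ ≤ ∑ i, ‖b.repr x i • (μ i • b i)‖ :=
        norm_sum_le _ _
    _ = ∑ i, μ i * |b.repr x i| := by
        refine Finset.sum_congr rfl fun i _ => ?_
        rw [norm_smul, norm_smul, b.orthonormal.1 i, Real.norm_eq_abs, Real.norm_eq_abs,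
          abs_of_nonneg (hμ i)]
        ring
    _ ≤ ∑ i, μ i * ‖x‖ := Finset.sum_le_sum fun i _ =>
        mul_le_mul_of_nonneg_left (hrep i) (hμ i)
    _ = A.trace * ‖x‖ := by rw [htr, Finset.sum_mul]

/-- if `Σ_a, Σ_safe ⪰ 0` have traces at most `ν`, `⟨ᾱ_j, Σ_safe⟩ ≤ ξ − ε₁` and
`⟨ᾱ_j, Σ_a⟩ ≤ ξ + c`, then with `φ = ε₁/(ε₁ + c)`, the matrix
`Σ' = φ·Σ_a + (1−φ)·Σ_safe` satisfies `⟨ᾱ_j, Σ'⟩ ≤ ξ` for all `j`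
and `‖Σ_a − Σ'‖ ≤ (2ν/ε₁)·c`. -/
theorem stmt_17 {d J : ℕ} (alphaBar : Fin J → Matrix (Fin d) (Fin d) ℝ)
    (halphaSymm : ∀ j, (alphaBar j).IsSymm) (halphaPsd : ∀ j, (alphaBar j).PosSemidef)
    (ξ ε₁ c ν : ℝ) (hε₁ : 0 < ε₁) (hc : 0 ≤ c) (hν : 0 < ν)
    (Sa Ssafe : Matrix (Fin d) (Fin d) ℝ) (hSa : Sa.PosSemidef) (hSsafe : Ssafe.PosSemidef)
    (htrSa : Sa.trace ≤ ν) (htrSsafe : Ssafe.trace ≤ ν)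
    (hSsafeC : ∀ j, matInner (alphaBar j) Ssafe ≤ ξ - ε₁)
    (hSaC : ∀ j, matInner (alphaBar j) Sa ≤ ξ + c) :
    (∀ j, matInner (alphaBar j)
        ((ε₁ / (ε₁ + c)) • Sa + (1 - ε₁ / (ε₁ + c)) • Ssafe) ≤ ξ) ∧
    specNorm (Sa - ((ε₁ / (ε₁ + c)) • Sa + (1 - ε₁ / (ε₁ + c)) • Ssafe)) ≤ 2 * ν / ε₁ * c := by
  have hεc : 0 < ε₁ + c := by linarith
  set φ := ε₁ / (ε₁ + c) with hφdef
  have hφ0 : 0 ≤ φ := by positivity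
  have hφ1 : φ ≤ 1 := by
    rw [hφdef, div_le_one hεc]; linarith
  constructor
  · intro j
    have hlin : matInner (alphaBar j) (φ • Sa + (1 - φ) • Ssafe)
        = φ * matInner (alphaBar j) Sa + (1 - φ) * matInner (alphaBar j) Ssafe := by
      simp [matInner, Matrix.mul_add, Matrix.mul_smul, Matrix.trace_add, Matrix.trace_smul,
        smul_eq_mul]
    rw [hlin]
    have key : φ * (ξ + c) + (1 - φ) * (ξ - ε₁) = ξ := by
      rw [hφdef]; field_simp; ring
    have h1 : φ * matInner (alphaBar j) Sa ≤ φ * (ξ + c) :=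
      mul_le_mul_of_nonneg_left (hSaC j) hφ0
    have h2 : (1 - φ) * matInner (alphaBar j) Ssafe ≤ (1 - φ) * (ξ - ε₁) :=
      mul_le_mul_of_nonneg_left (hSsafeC j) (by linarith)
    linarith
  · have hdiff : Sa - (φ • Sa + (1 - φ) • Ssafe) = (1 - φ) • (Sa - Ssafe) := by
      ext i k
      simp [Matrix.sub_apply, Matrix.add_apply, Matrix.smul_apply, smul_eq_mul]
      ring
    rw [hdiff, specNorm_eq_norm, norm_smul, Real.norm_eq_abs, abs_of_nonneg (by linarith)]
    have hSaN : ‖Sa‖ ≤ ν := le_trans (specNorm_psd_le_trace hSa) htrSa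
    have hSsN : ‖Ssafe‖ ≤ ν := le_trans (specNorm_psd_le_trace hSsafe) htrSsafe
    have hsub : ‖Sa - Ssafe‖ ≤ 2 * ν := by
      calc ‖Sa - Ssafe‖ ≤ ‖Sa‖ + ‖Ssafe‖ := norm_sub_le _ _
        _ ≤ 2 * ν := by linarith
    have h1φ : 1 - φ = c / (ε₁ + c) := by rw [hφdef]; field_simp; ring
    have hnn : (0:ℝ) ≤ ‖Sa - Ssafe‖ := norm_nonneg _
    calc (1 - φ) * ‖Sa - Ssafe‖ ≤ (1 - φ) * (2 * ν) :=
          mul_le_mul_of_nonneg_left hsub (by linarith)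
      _ ≤ c / ε₁ * (2 * ν) := by
          rw [h1φ]
          have : c / (ε₁ + c) ≤ c / ε₁ :=
            div_le_div_of_nonneg_left hc hε₁ (by linarith)
          nlinarith
      _ = 2 * ν / ε₁ * c := by field_simp
end
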